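/- arXiv:2006.15646 — 13 statements merged into one kernel-verified Lean document; each statement's English description precedes it below -/
import Mathlib

section
/- Let X be a compact topological space and F a subalgebra of C(X, ℝ) containing the constant function 1. Then the uniform closure of F equals the set of continuous real-valued functions f on X such that sep(F) ⊆ sep(f), i.e., such that f(x) = f(x') whenever g(x) = g(x') for all g ∈ F. -/
/-- Fine-grained Stone-Weierstrass: the closure of a unital subalgebra of `C(X, ℝ)`
is the set of continuous functions at least as separating. -/
theorem stmt1 {X : Type*} [TopologicalSpace X] [CompactSpace X]
    (F : Subalgebra ℝ C(X, ℝ)) :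
    closure (F : Set C(X, ℝ)) =
      {f : C(X, ℝ) | ∀ x x' : X, (∀ g ∈ F, g x = g x') → f x = f x'} := by
  apply Set.Subset.antisymm
  · -- closure ⊆ set
    have hclosed : IsClosed {f : C(X, ℝ) | ∀ x x' : X, (∀ g ∈ F, g x = g x') → f x = f x'} := by
      have : {f : C(X, ℝ) | ∀ x x' : X, (∀ g ∈ F, g x = g x') → f x = f x'} =
          ⋂ (x : X), ⋂ (x' : X), ⋂ (_ : ∀ g ∈ F, g x = g x'),
            {f : C(X, ℝ) | f x = f x'} := by
        ext f; simp [Set.mem_iInter]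
      rw [this]
      refine isClosed_iInter fun x => isClosed_iInter fun x' => isClosed_iInter fun _ => ?_
      exact isClosed_eq (continuous_eval_const x)
        (continuous_eval_const x')
    refine closure_minimal ?_ hclosed
    intro g hg x x' h
    exact h g hg
  · -- set ⊆ closure
    intro f hf
    -- quotient by the separation relation of F
    let S : Setoid X := ⟨fun x x' => ∀ g ∈ F, g x = g x',
      ⟨fun _ _ _ => rfl, fun h g hg => (h g hg).symm, fun h1 h2 g hg => (h1 g hg).trans (h2 g hg)⟩⟩
    let Y := Quotient S
    let π : C(X, Y) := ⟨Quotient.mk S, continuous_quotient_mk'⟩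
    let Φ : C(Y, ℝ) →ₐ[ℝ] C(X, ℝ) := ContinuousMap.compRightAlgHom ℝ ℝ π
    let A : Subalgebra ℝ C(Y, ℝ) := F.comap Φ
    have hA : A.SeparatesPoints := by
      rintro ⟨x⟩ ⟨x'⟩ hxx
      have hne : ¬ (∀ g ∈ F, g x = g x') := fun h => hxx (Quotient.sound h)
      push_neg at hne
      obtain ⟨g, hgF, hgx⟩ := hne
      let gbar : C(Y, ℝ) := ⟨Quotient.lift g (fun a b hab => hab g hgF),
        continuous_quot_lift _ g.continuous⟩
      have hgbar : gbar ∈ A := by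
        show Φ gbar ∈ F
        have h1 : Φ gbar = g := by ext z; rfl
        rw [h1]; exact hgF
      exact ⟨_, ⟨gbar, hgbar, rfl⟩, hgx⟩
    -- f descends to Y
    let fbar : C(Y, ℝ) := ⟨Quotient.lift f (fun a b hab => hf a b hab),
      continuous_quot_lift _ f.continuous⟩
    have hfbar : fbar ∈ A.topologicalClosure :=
      ContinuousMap.continuousMap_mem_subalgebra_closure_of_separatesPoints A hA fbar
    have hΦf : Φ fbar = f := by ext x; rfl
    have hΦcont : Continuous (Φ : C(Y, ℝ) → C(X, ℝ)) :=
      ContinuousMap.compRightAlgHom_continuous ℝ ℝ π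
    have : f ∈ closure (Φ '' (A : Set C(Y, ℝ))) := by
      rw [← hΦf]
      exact image_closure_subset_closure_image hΦcont ⟨fbar, hfbar, rfl⟩
    refine closure_mono ?_ this
    rintro _ ⟨g, hg, rfl⟩
    exact hg
end

section
/- Let A be a subalgebra of ℝ^p (with coordinatewise multiplication) such that for every index i there exists x ∈ A with x_i ≠ 0, and for every pair of distinct indices i ≠ j there exists x ∈ A with x_i ≠ x_j. Then A = ℝ^p. -/
/-- A (possibly non-unital) subalgebra of `ℝ^p` whose coordinates are nonvanishing and
pairwise separated is all of `ℝ^p`. -/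
theorem stmt3 {p : ℕ} (A : NonUnitalSubalgebra ℝ (Fin p → ℝ))
    (h1 : ∀ i : Fin p, ∃ x ∈ A, x i ≠ 0)
    (h2 : ∀ i j : Fin p, i ≠ j → ∃ x ∈ A, x i ≠ x j) :
    (A : Set (Fin p → ℝ)) = Set.univ := by
  by_contra hA
  have hV : (A.toSubmodule : Submodule ℝ (Fin p → ℝ)) ≠ ⊤ := by
    intro h
    apply hA
    ext x
    simp only [Set.mem_univ, iff_true]
    have : x ∈ (A.toSubmodule : Submodule ℝ (Fin p → ℝ)) := h ▸ Submodule.mem_top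
    exact this
  obtain ⟨f, hf0, hfbot⟩ :=
    Submodule.exists_dual_map_eq_bot_of_lt_top (p := A.toSubmodule) hV.lt_top inferInstance
  set c : Fin p → ℝ := fun j => f (Pi.single j 1) with hc
  have hfx : ∀ x : Fin p → ℝ, f x = ∑ j, c j * x j := by
    intro x
    have hx : x = ∑ j, x j • (Pi.single j (1 : ℝ) : Fin p → ℝ) := by
      ext k
      simp [Pi.single_apply, Finset.sum_ite_eq', mul_comm]
    conv_lhs => rw [hx]
    rw [map_sum]
    congr 1
    ext j
    rw [map_smul]
    simp [hc, mul_comm]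
  have hW : ∀ x ∈ A, ∑ j, c j * x j = 0 := by
    intro x hx
    have : f x ∈ Submodule.map f A.toSubmodule := ⟨x, hx, rfl⟩
    rw [hfbot] at this
    simpa [hfx x] using this
  have hc0 : c ≠ 0 := by
    intro h
    apply hf0
    ext x
    simpa [hc] using congrFun h x
  -- key induction on the size of the support of an annihilating vector
  have key : ∀ n (d : Fin p → ℝ), (∀ x ∈ A, ∑ j, d j * x j = 0) → d ≠ 0 →
      (Finset.univ.filter (fun j => d j ≠ 0)).card ≠ n := by
    intro n
    induction n using Nat.strong_induction_on with
    | _ n ih =>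
      intro d hdW hd0 hcard
      obtain ⟨j0, hj0⟩ : ∃ j0, d j0 ≠ 0 := Function.ne_iff.mp hd0
      have hzero : ∀ x ∈ A, ∀ j, d j * (x j - x j0) = 0 := by
        intro x hx
        set e : Fin p → ℝ := fun j => d j * x j - x j0 * d j with he
        have heW : ∀ y ∈ A, ∑ j, e j * y j = 0 := by
          intro y hy
          have hxy := hdW (x * y) (mul_mem hx hy)
          have hy' := hdW y hy
          have : ∑ j, e j * y j = (∑ j, d j * (x * y) j) - x j0 * ∑ j, d j * y j := by
            rw [Finset.mul_sum, ← Finset.sum_sub_distrib]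
            congr 1
            ext j
            simp [he, Pi.mul_apply]
            ring
          rw [this, hxy, hy']
          ring
        have he0 : e = 0 := by
          by_contra hne
          have hsub : (Finset.univ.filter (fun j => e j ≠ 0)) ⊆
              (Finset.univ.filter (fun j => d j ≠ 0)).erase j0 := by
            intro j hj
            simp only [Finset.mem_filter, Finset.mem_univ, true_and] at hj
            rw [Finset.mem_erase]
            constructor
            · intro h
              apply hj
              simp [he, h]
              ring
            · simp only [Finset.mem_filter, Finset.mem_univ, true_and]
              intro h
              apply hj
              simp [he, h]
          have hlt : (Finset.univ.filter (fun j => e j ≠ 0)).card < n := by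
            calc (Finset.univ.filter (fun j => e j ≠ 0)).card
                ≤ ((Finset.univ.filter (fun j => d j ≠ 0)).erase j0).card :=
                  Finset.card_le_card hsub
              _ < (Finset.univ.filter (fun j => d j ≠ 0)).card := by
                  apply Finset.card_erase_lt_of_mem
                  simp [hj0]
              _ = n := hcard
          exact ih _ hlt e heW hne rfl
        intro j
        have : e j = 0 := by rw [he0]; rfl
        simp only [he] at this
        nlinarith [this]
      by_cases hs : ∃ k, k ≠ j0 ∧ d k ≠ 0
      · obtain ⟨k, hk, hdk⟩ := hs
        obtain ⟨x, hx, hxk⟩ := h2 k j0 hk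
        have h := hzero x hx k
        rcases mul_eq_zero.mp h with h' | h'
        · exact hdk h'
        · exact hxk (by linarith)
      · push_neg at hs
        obtain ⟨x, hx, hxi⟩ := h1 j0
        have hsum := hdW x hx
        have : ∑ j, d j * x j = d j0 * x j0 := by
          apply Finset.sum_eq_single j0
          · intro j _ hj
            rw [hs j hj, zero_mul]
          · intro h
            exact absurd (Finset.mem_univ j0) h
        rw [this] at hsum
        exact mul_ne_zero hj0 hxi hsum
  exact key _ c hW hc0 rfl
end

section
/- Let A be a subalgebra of ℝ^p with coordinatewise multiplication. Define J = {j : ∀x ∈ A, x_j = 0} and I = {(i,j) with i,j ∉ J : ∀x ∈ A, x_i = x_j}. Then A = {x ∈ ℝ^p : x_i = x_j for all (i,j) ∈ I, and x_j = 0 for all j ∈ J}. -/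
/-- Characterization of the subalgebras of `ℝ^p`. -/
theorem stmt4 {p : ℕ} (A : NonUnitalSubalgebra ℝ (Fin p → ℝ))
    (J : Set (Fin p)) (I : Set (Fin p × Fin p))
    (hJ : J = {j : Fin p | ∀ x ∈ A, x j = 0})
    (hI : I = {ij : Fin p × Fin p | ij.1 ∉ J ∧ ij.2 ∉ J ∧ ∀ x ∈ A, x ij.1 = x ij.2}) :
    (A : Set (Fin p → ℝ)) =
      {x : Fin p → ℝ | (∀ ij ∈ I, x ij.1 = x ij.2) ∧ ∀ j ∈ J, x j = 0} := by
  classical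
  apply Set.Subset.antisymm
  · intro y hy
    refine ⟨fun ij hij => ?_, fun j hj => ?_⟩
    · rw [hI] at hij; exact hij.2.2 y hy
    · rw [hJ] at hj; exact hj y hy
  · rintro y ⟨hy1, hy2⟩
    set R : Fin p → Fin p → Prop := fun i j => ∀ x ∈ A, x i = x j with hRdef
    have hRrefl : ∀ i, R i i := fun i x _ => rfl
    have hRsymm : ∀ {i j}, R i j → R j i := fun h x hx => (h x hx).symm
    have hnJ : ∀ i, i ∉ J → ∃ c ∈ A, c i ≠ 0 := by
      intro i hi
      rw [hJ] at hi
      simp only [Set.mem_setOf_eq, not_forall] at hi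
      obtain ⟨x, hx, hxi⟩ := hi
      exact ⟨x, hx, hxi⟩
    have hJR : ∀ i k, k ∈ J → R i k → i ∈ J := by
      intro i k hk hik
      rw [hJ] at hk ⊢
      intro x hx
      rw [hik x hx]
      exact hk x hx
    -- choose witnesses c with c i ≠ 0 for i ∉ J
    have hc' : ∀ i : Fin p, ∃ c, c ∈ (A : Set (Fin p → ℝ)) ∧ (i ∉ J → c i ≠ 0) := by
      intro i
      by_cases hi : i ∉ J
      · obtain ⟨c, hc, hci⟩ := hnJ i hi
        exact ⟨c, hc, fun _ => hci⟩
      · exact ⟨0, A.zero_mem, fun h => absurd h hi⟩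
    choose c hcA hci using hc'
    -- separating elements
    have hd' : ∀ i j : Fin p, ∃ d, d ∈ (A : Set (Fin p → ℝ)) ∧
        (i ∉ J → ¬ R i j → d i ≠ 0 ∧ d j = 0) := by
      intro i j
      by_cases h : i ∉ J ∧ ¬ R i j
      · obtain ⟨hi, hij⟩ := h
        have ha : ∃ a ∈ A, a i ≠ a j := by
          simp only [hRdef, not_forall] at hij
          obtain ⟨a, haA, haij⟩ := hij
          exact ⟨a, haA, haij⟩
        obtain ⟨a, haA, haij⟩ := ha
        have hu : ∃ u, u ∈ (A : Set (Fin p → ℝ)) ∧ u i ≠ 0 ∧ u i ≠ u j := by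
          by_cases hai : a i = 0
          · have haj : a j ≠ 0 := fun h => haij (by rw [hai, h])
            set t : ℝ := (c i i - c i j + a j) / a j with ht
            refine ⟨c i + t • a, A.add_mem (hcA i) (A.smul_mem t haA), ?_, ?_⟩
            · simpa [hai] using hci i hi
            · simp only [Pi.add_apply, Pi.smul_apply, smul_eq_mul]
              rw [hai, mul_zero, add_zero, ht, div_mul_cancel₀ _ haj]
              intro hcon
              apply haj
              linarith
          · exact ⟨a, haA, hai, haij⟩
        obtain ⟨u, huA, hui, huij⟩ := hu
        refine ⟨u * u - u j • u, A.sub_mem (A.mul_mem huA huA) (A.smul_mem (u j) huA),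
          fun _ _ => ⟨?_, ?_⟩⟩
        · simp only [Pi.sub_apply, Pi.mul_apply, Pi.smul_apply, smul_eq_mul]
          have : u i * u i - u j * u i = u i * (u i - u j) := by ring
          rw [this]
          exact mul_ne_zero hui (sub_ne_zero.mpr huij)
        · simp [Pi.sub_apply, Pi.mul_apply, Pi.smul_apply]
      · refine ⟨0, A.zero_mem, fun h1 h2 => absurd ⟨h1, h2⟩ h⟩
    choose d hdA hd using hd'
    -- indicator-like elements
    set T : Fin p → Finset (Fin p) := fun i => Finset.univ.filter (fun j => ¬ R i j) with hT
    set g : Fin p → (Fin p → ℝ) := fun i => c i * ∏ j ∈ T i, d i j with hg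
    have hgA : ∀ i, g i ∈ (A : Set (Fin p → ℝ)) := by
      intro i
      have key : ∀ s : Finset (Fin p), c i * ∏ j ∈ s, d i j ∈ (A : Set (Fin p → ℝ)) := by
        intro s
        induction s using Finset.induction_on with
        | empty => simpa using hcA i
        | @insert a s ha ih =>
            rw [Finset.prod_insert ha, mul_left_comm]
            exact A.mul_mem (hdA i a) ih
      exact key (T i)
    have hgi : ∀ i, i ∉ J → g i i ≠ 0 := by
      intro i hi
      rw [hg]
      simp only [Pi.mul_apply, Finset.prod_apply]
      refine mul_ne_zero (hci i hi) (Finset.prod_ne_zero_iff.mpr ?_)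
      intro j hj
      rw [hT, Finset.mem_filter] at hj
      exact (hd i j hi hj.2).1
    have hg0 : ∀ i k, i ∉ J → ¬ R i k → g i k = 0 := by
      intro i k hi hik
      rw [hg]
      simp only [Pi.mul_apply, Finset.prod_apply]
      have hk : k ∈ T i := by rw [hT, Finset.mem_filter]; exact ⟨Finset.mem_univ k, hik⟩
      rw [Finset.prod_eq_zero (f := fun j => d i j k) hk (hd i k hi hik).2, mul_zero]
    set e : Fin p → (Fin p → ℝ) := fun i => (g i i)⁻¹ • g i with he
    have heA : ∀ i, e i ∈ (A : Set (Fin p → ℝ)) := fun i => A.smul_mem ((g i i)⁻¹) (hgA i)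
    have hev : ∀ i k, i ∉ J → e i k = if R i k then 1 else 0 := by
      intro i k hi
      rw [he]
      simp only [Pi.smul_apply, smul_eq_mul]
      by_cases hik : R i k
      · rw [if_pos hik, ← hik (g i) (hgA i), inv_mul_cancel₀ (hgi i hi)]
      · rw [if_neg hik, hg0 i k hi hik, mul_zero]
    set S : Finset (Fin p) := Finset.univ.filter (fun i => i ∉ J) with hS
    set n : Fin p → ℕ := fun i => (S.filter (fun j => R i j)).card with hn
    have hkey : y = ∑ i ∈ S, (y i / n i) • e i := by
      funext k
      rw [Finset.sum_apply]
      have hterm : ∀ i ∈ S, ((y i / n i) • e i) k = if R i k then y i / n i else 0 := by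
        intro i hi
        rw [hS, Finset.mem_filter] at hi
        rw [Pi.smul_apply, smul_eq_mul, hev i k hi.2, mul_ite, mul_one, mul_zero]
      rw [Finset.sum_congr rfl hterm, ← Finset.sum_filter]
      by_cases hk : k ∈ J
      · rw [hy2 k hk]
        refine (Finset.sum_eq_zero ?_).symm
        intro i hi
        rw [Finset.mem_filter, hS, Finset.mem_filter] at hi
        exact absurd (hJR i k hk hi.2) hi.1.2
      · have hnk : (n k : ℝ) ≠ 0 := by
          have : k ∈ S.filter (fun j => R k j) := by
            rw [Finset.mem_filter, hS, Finset.mem_filter]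
            exact ⟨⟨Finset.mem_univ k, hk⟩, hRrefl k⟩
          have hpos : 0 < n k := by
            rw [hn]
            exact Finset.card_pos.mpr ⟨k, this⟩
          exact_mod_cast hpos.ne'
        have hsame : ∀ i ∈ S.filter (fun i => R i k), y i / n i = y k / n k := by
          intro i hi
          rw [Finset.mem_filter, hS, Finset.mem_filter] at hi
          obtain ⟨⟨-, hiJ⟩, hik⟩ := hi
          have hyi : y i = y k := by
            have : (k, i) ∈ I := by
              rw [hI]; exact ⟨hk, hiJ, hRsymm hik⟩
            exact (hy1 (k, i) this).symm
          have hni : n i = n k := by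
            rw [hn]
            refine congrArg Finset.card (Finset.filter_congr fun j _ => ⟨?_, ?_⟩)
            · intro hij x hx; rw [← hik x hx]; exact hij x hx
            · intro hkj x hx; rw [hik x hx]; exact hkj x hx
          rw [hyi, hni]
        rw [Finset.sum_congr rfl hsame, Finset.sum_const]
        have hcard : (S.filter (fun i => R i k)).card = n k := by
          rw [hn]
          exact congrArg Finset.card
            (Finset.filter_congr fun j _ => ⟨fun h => hRsymm h, fun h => hRsymm h⟩)
        rw [hcard, nsmul_eq_mul, mul_comm, div_mul_cancel₀ _ hnk]
    rw [hkey]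
    exact sum_mem (fun i _ => A.smul_mem (y i / n i) (heA i))
end

section
/- Let A be a subalgebra of ℝ^p containing the all-ones vector, and suppose that for every pair of distinct indices i ≠ j there exists x ∈ A with x_i ≠ x_j. Then A contains a vector all of whose coordinates are pairwise distinct. -/
/-- A subalgebra of `ℝ^p` containing the all-ones vector and separating coordinates
contains a vector with pairwise distinct coordinates. -/
theorem stmt6 {p : ℕ} (A : NonUnitalSubalgebra ℝ (Fin p → ℝ))
    (hone : (fun _ : Fin p => (1 : ℝ)) ∈ A)
    (h2 : ∀ i j : Fin p, i ≠ j → ∃ x ∈ A, x i ≠ x j) :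
    ∃ x ∈ A, ∀ i j : Fin p, i ≠ j → x i ≠ x j := by
  classical
  set E := A.toSubmodule
  -- index of distinct pairs
  let ι := {q : Fin p × Fin p // q.1 ≠ q.2}
  let K : ι → Subspace ℝ ↥E := fun q =>
    LinearMap.ker (((LinearMap.proj q.1.1 : (Fin p → ℝ) →ₗ[ℝ] ℝ)
      - LinearMap.proj q.1.2).comp E.subtype)
  have hne : ∀ q : ι, K q ≠ ⊤ := by
    rintro ⟨⟨i, j⟩, hij⟩ h
    obtain ⟨x, hxA, hx⟩ := h2 i j hij
    have : (⟨x, hxA⟩ : ↥E) ∈ K ⟨⟨i, j⟩, hij⟩ := h ▸ Submodule.mem_top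
    simp only [K, LinearMap.mem_ker, LinearMap.comp_apply, LinearMap.sub_apply,
      LinearMap.proj_apply, Submodule.subtype_apply] at this
    exact hx (sub_eq_zero.mp this)
  by_contra hcon
  push_neg at hcon
  have hcov : ⋃ q : ι, (K q : Set ↥E) = Set.univ := by
    ext v
    simp only [Set.mem_iUnion, Set.mem_univ, iff_true]
    obtain ⟨i, j, hij, hv⟩ := hcon v.1 v.2
    refine ⟨⟨⟨i, j⟩, hij⟩, ?_⟩
    simp only [K, SetLike.mem_coe, LinearMap.mem_ker, LinearMap.comp_apply,
      LinearMap.sub_apply, LinearMap.proj_apply, Submodule.subtype_apply]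
    rw [hv, sub_self]
  obtain ⟨q, hq⟩ := Subspace.exists_eq_top_of_iUnion_eq_univ hcov
  exact hne q hq
end

section
/- Let X be a set, G a finite group acting on X, p ≥ 1, and F a set of functions X → ℝ^p that is a linear subspace closed under coordinatewise multiplication (as functions). Then for any subgroup H ⊆ G and any x, y ∈ X: (for every f ∈ F there exists g ∈ H with f(g·x) = f(y)) if and only if (there exists g ∈ H such that for every f ∈ F, f(g·x) = f(y)). -/
/-- Exchange of quantifiers for subalgebras of vector-valued functions under a finite
group action. -/
theorem stmt8 {X G : Type*} [Group G] [Finite G] [MulAction G X]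
    {p : ℕ} (hp : 1 ≤ p)
    (F : NonUnitalSubalgebra ℝ (X → Fin p → ℝ))
    (H : Subgroup G) (x y : X) :
    (∀ f ∈ F, ∃ g ∈ H, f (g • x) = f y) ↔ (∃ g ∈ H, ∀ f ∈ F, f (g • x) = f y) := by
  constructor
  · intro hL
    -- linear map from F to ℝ^p : f ↦ f(g•x) - f(y)
    let L : H → (F →ₗ[ℝ] (Fin p → ℝ)) := fun g =>
      { toFun := fun f => (f : X → Fin p → ℝ) ((g : G) • x) - (f : X → Fin p → ℝ) y
        map_add' := by intro a b; simp [Pi.add_apply]; abel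
        map_smul' := by intro c a; simp [smul_sub] }
    have hcov : ⋃ g : H, ((LinearMap.ker (L g) : Submodule ℝ F) : Set F) = Set.univ := by
      apply Set.eq_univ_of_forall
      intro f
      obtain ⟨g, hg, hfg⟩ := hL f f.2
      refine Set.mem_iUnion.mpr ⟨⟨g, hg⟩, ?_⟩
      simp only [SetLike.mem_coe, LinearMap.mem_ker, L, LinearMap.coe_mk, AddHom.coe_mk]
      simp [hfg]
    obtain ⟨g, hg⟩ := Subspace.exists_eq_top_of_iUnion_eq_univ hcov
    refine ⟨g, g.2, ?_⟩
    intro f hf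
    have : (⟨f, hf⟩ : F) ∈ LinearMap.ker (L g) := hg ▸ Submodule.mem_top
    have h' := LinearMap.mem_ker.mp this
    simpa [L, sub_eq_zero] using h'
  · rintro ⟨g, hg, hgy⟩ f hf
    exact ⟨g, hg, hgy f hf⟩
end

section
/- Let X be a compact space, Y = ℝ^p, G a finite group acting continuously on X and acting on Y, and F a nonempty subalgebra of C(X,Y) consisting of equivariant functions and containing the constant function 1. Let F_scal = {f ∈ C(X,ℝ) : the function x ↦ (f(x),…,f(x)) belongs to F}, and let π : Y → Y/G be the quotient map. Assume sep(F_scal) ⊆ sep(π∘F). Then the uniform closure of F equals {f ∈ C_E(X,Y) : sep(F) ⊆ sep(f) and f(x) ∈ F(x) for all x ∈ X}, where F(x) = {f(x) : f ∈ F}. Moreover, with I(x) = {(i,j) : y_i = y_j for all y ∈ F(x)}, we have F(x) = {y ∈ ℝ^p : y_i = y_j for all (i,j) ∈ I(x)}. -/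
lemma aux_cont {X : Type*} [TopologicalSpace X] {p : ℕ} (h : C(X, Fin p → ℝ)) :
    Continuous fun z : X × Fin p => h z.1 z.2 := by
  have hrw : (fun z : X × Fin p => h z.1 z.2)
      = fun z : X × Fin p => ∑ i : Fin p, (if z.2 = i then (1:ℝ) else 0) * h z.1 i := by
    funext z
    rw [Finset.sum_eq_single z.2]
    · simp
    · intro b _ hb; simp [Ne.symm hb]
    · simp
  rw [hrw]
  refine continuous_finset_sum _ fun i _ => Continuous.mul ?_ ?_
  · exact (continuous_of_discreteTopology
      (f := fun j : Fin p => if j = i then (1:ℝ) else 0)).comp continuous_snd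
  · exact (continuous_apply i).comp (h.continuous.comp continuous_fst)
lemma aux_values {X : Type*} [TopologicalSpace X] {p : ℕ} (F : Set C(X, Fin p → ℝ))
    (hadd : ∀ f ∈ F, ∀ g ∈ F, f + g ∈ F)
    (hsmul : ∀ c : ℝ, ∀ f ∈ F, c • f ∈ F)
    (hmul : ∀ f ∈ F, ∀ g ∈ F, f * g ∈ F)
    (hone : (1 : C(X, Fin p → ℝ)) ∈ F) (x : X) :
    {y : Fin p → ℝ | ∃ h ∈ F, h x = y} =
      {y : Fin p → ℝ | ∀ i j : Fin p,
        (∀ z : Fin p → ℝ, (∃ h ∈ F, h x = z) → z i = z j) → y i = y j} := by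
  classical
  apply Set.Subset.antisymm
  · rintro y ⟨h, hh, rfl⟩ i j hij
    exact hij (h x) ⟨h, hh, rfl⟩
  intro y hy
  let E : Subalgebra ℝ (Fin p → ℝ) :=
    { carrier := {y : Fin p → ℝ | ∃ h ∈ F, h x = y}
      mul_mem' := by rintro a b ⟨h1, m1, rfl⟩ ⟨h2, m2, rfl⟩; exact ⟨h1 * h2, hmul _ m1 _ m2, rfl⟩
      add_mem' := by rintro a b ⟨h1, m1, rfl⟩ ⟨h2, m2, rfl⟩; exact ⟨h1 + h2, hadd _ m1 _ m2, rfl⟩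
      one_mem' := ⟨1, hone, rfl⟩
      zero_mem' := ⟨(0:ℝ) • 1, hsmul 0 1 hone, by simp⟩
      algebraMap_mem' := fun r => ⟨r • 1, hsmul r 1 hone, by ext i; simp⟩ }
  have hEmem : ∀ v : Fin p → ℝ, v ∈ E ↔ ∃ h ∈ F, h x = v := fun v => Iff.rfl
  set R : Fin p → Fin p → Prop := fun i j => ∀ h ∈ F, h x i = h x j with hRdef
  have hRrefl : ∀ i, R i i := fun i h _ => rfl
  have hRsymm : ∀ {i j}, R i j → R j i := fun hij h hh => (hij h hh).symm
  have hRtrans : ∀ {i j k}, R i j → R j k → R i k := fun hij hjk h hh => (hij h hh).trans (hjk h hh)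
  have hEe : ∀ {i k} (v : Fin p → ℝ), v ∈ E → R i k → v k = v i := by
    rintro i k v hv hik
    obtain ⟨h, hh, rfl⟩ := hv
    exact (hik h hh).symm
  have hy' : ∀ i j, R i j → y i = y j := by
    intro i j hij
    refine hy i j ?_
    rintro z ⟨h, hh, rfl⟩
    exact hij h hh
  -- building blocks
  have hb : ∀ i j : Fin p, ¬ R i j → ∃ v, v ∈ E ∧ v i = 1 ∧ v j = 0 := by
    intro i j hij
    have hij' : ∃ h ∈ F, h x i ≠ h x j := by
      by_contra hc; push_neg at hc; exact hij fun h hh => hc h hh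
    obtain ⟨h, hh, hne⟩ := hij'
    have hd : h x i - h x j ≠ 0 := sub_ne_zero_of_ne hne
    refine ⟨(h x i - h x j)⁻¹ • (h x - h x j • (1 : Fin p → ℝ)), ?_, ?_, ?_⟩
    · exact E.smul_mem (E.sub_mem ⟨h, hh, rfl⟩ (E.smul_mem E.one_mem _)) _
    · simp only [Pi.smul_apply, Pi.sub_apply, Pi.one_apply, smul_eq_mul, mul_one]
      exact inv_mul_cancel₀ hd
    · simp
  let B : Fin p → Fin p → (Fin p → ℝ) := fun i j =>
    if hij : ¬ R i j then (hb i j hij).choose else 1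
  have hBE : ∀ i j, B i j ∈ E := by
    intro i j
    by_cases hij : ¬ R i j
    · simp only [B, dif_pos hij]; exact (hb i j hij).choose_spec.1
    · simp only [B, dif_neg hij]; exact E.one_mem
  have hB1 : ∀ i j, ¬ R i j → B i j i = 1 := by
    intro i j hij
    simp only [B, dif_pos hij]; exact (hb i j hij).choose_spec.2.1
  have hB0 : ∀ i j, ¬ R i j → B i j j = 0 := by
    intro i j hij
    simp only [B, dif_pos hij]; exact (hb i j hij).choose_spec.2.2
  let e : Fin p → (Fin p → ℝ) := fun i => ∏ j ∈ Finset.univ.filter fun j => ¬ R i j, B i j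
  have heE : ∀ i, e i ∈ E := fun i => E.prod_mem fun j _ => hBE i j
  have he1 : ∀ i k, R i k → e i k = 1 := by
    intro i k hik
    have h1 : e i k = e i i := hEe (e i) (heE i) hik
    rw [h1]
    show (∏ j ∈ Finset.univ.filter fun j => ¬ R i j, B i j) i = 1
    rw [Finset.prod_apply]
    refine Finset.prod_eq_one fun j hj => hB1 i j (Finset.mem_filter.mp hj).2
  have he0 : ∀ i k, ¬ R i k → e i k = 0 := by
    intro i k hik
    show (∏ j ∈ Finset.univ.filter fun j => ¬ R i j, B i j) k = 0
    rw [Finset.prod_apply]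
    exact Finset.prod_eq_zero (Finset.mem_filter.mpr ⟨Finset.mem_univ k, hik⟩) (hB0 i k hik)
  let n : Fin p → ℕ := fun i => (Finset.univ.filter fun j => R i j).card
  have hn : ∀ i, (0:ℝ) < n i := by
    intro i
    have : 0 < n i := Finset.card_pos.mpr ⟨i, Finset.mem_filter.mpr ⟨Finset.mem_univ i, hRrefl i⟩⟩
    exact_mod_cast this
  let z : Fin p → ℝ := ∑ i : Fin p, (y i / n i) • e i
  have hzE : z ∈ E := E.sum_mem fun i _ => E.smul_mem (heE i) _
  have hzy : z = y := by
    funext k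
    have hfil : ∀ {i}, R i k → (Finset.univ.filter fun j => R i j)
        = (Finset.univ.filter fun j => R k j) := by
      intro i hik
      ext j
      simp only [Finset.mem_filter, Finset.mem_univ, true_and]
      exact ⟨fun h => hRtrans (hRsymm hik) h, fun h => hRtrans hik h⟩
    have h1 : z k = ∑ i : Fin p, y i / (n i : ℝ) * e i k := by
      simp only [z, Finset.sum_apply, Pi.smul_apply, smul_eq_mul]
    rw [h1, ← Finset.sum_filter_add_sum_filter_not Finset.univ (fun i => R i k)]
    have h2 : ∑ i ∈ Finset.univ.filter fun i => ¬ R i k, y i / (n i : ℝ) * e i k = 0 :=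
      Finset.sum_eq_zero fun i hi => by
        rw [he0 i k (Finset.mem_filter.mp hi).2, mul_zero]
    have h3 : ∑ i ∈ Finset.univ.filter fun i => R i k, y i / (n i : ℝ) * e i k
        = ∑ _i ∈ Finset.univ.filter fun i => R i k, y k / (n k : ℝ) :=
      Finset.sum_congr rfl fun i hi => by
        have hik : R i k := (Finset.mem_filter.mp hi).2
        have hni : n i = n k := congrArg Finset.card (hfil hik)
        rw [he1 i k hik, mul_one, hy' i k hik, hni]
    have h4 : (Finset.univ.filter fun i => R i k) = (Finset.univ.filter fun j => R k j) := by
      ext j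
      simp only [Finset.mem_filter, Finset.mem_univ, true_and]
      exact ⟨fun h => hRsymm h, fun h => hRsymm h⟩
    have h5 : (Finset.univ.filter fun i => R i k).card = n k := congrArg Finset.card h4
    rw [h2, h3, add_zero, Finset.sum_const, h5, nsmul_eq_mul, mul_comm,
      div_mul_cancel₀ _ (hn k).ne']
  rw [← hzy]
  exact hzE
lemma aux_key {X G : Type*} [TopologicalSpace X] [Group G] [Finite G]
    [MulAction G X] {p : ℕ} [MulAction G (Fin p → ℝ)]
    (F : Set C(X, Fin p → ℝ))
    (hadd : ∀ f ∈ F, ∀ g ∈ F, f + g ∈ F)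
    (hsmul : ∀ c : ℝ, ∀ f ∈ F, c • f ∈ F)
    (hone : (1 : C(X, Fin p → ℝ)) ∈ F)
    (hequiv : ∀ f ∈ F, ∀ g : G, ∀ x : X, f (g • x) = g • f x)
    (hscal : ∀ x x' : X,
      (∀ f : C(X, ℝ), (∃ k ∈ F, ∀ z : X, k z = fun _ => f z) → f x = f x') →
      ∀ f ∈ F, MulAction.orbit G (f x) = MulAction.orbit G (f x'))
    (f : C(X, Fin p → ℝ))
    (hfe : ∀ g : G, ∀ x : X, f (g • x) = g • f x)
    (hfs : ∀ x x' : X, (∀ h ∈ F, h x = h x') → f x = f x')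
    (hfv : ∀ x : X, ∃ h ∈ F, h x = f x)
    (x x' : X) (i j : Fin p) (hyp : ∀ h ∈ F, h x i = h x' j) :
    f x i = f x' j := by
  classical
  have hFscal : ∀ k : C(X, ℝ), (∃ m ∈ F, ∀ z : X, m z = fun _ => k z) → k x = k x' := by
    rintro k ⟨m, hm, hmk⟩
    have h1 := hyp m hm
    rw [hmk x, hmk x'] at h1
    simpa using h1
  have horb := hscal x x' hFscal
  set S : C(X, Fin p → ℝ) → Set G := fun h => {g : G | h (g • x) = h x'} with hSdef
  have hSne : ∀ h ∈ F, (S h).Nonempty := by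
    intro h hh
    have h1 : h x' ∈ MulAction.orbit G (h x) := by
      rw [horb h hh]; exact MulAction.mem_orbit_self _
    obtain ⟨g, hg⟩ := MulAction.mem_orbit_iff.mp h1
    exact ⟨g, by show h (g • x) = h x'; rw [hequiv h hh g x, hg]⟩
  have hdir : ∀ h₁ ∈ F, ∀ h₂ ∈ F, ∃ h₃ ∈ F, S h₃ ⊆ S h₁ ∩ S h₂ := by
    intro h₁ m₁ h₂ m₂
    set U : Set ℝ := ⋃ g ∈ {g : G | ¬(g ∈ S h₁ ∧ g ∈ S h₂)},
      {t : ℝ | h₁ (g • x) + t • h₂ (g • x) = h₁ x' + t • h₂ x'} with hUdef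
    have hUfin : U.Finite := by
      refine Set.Finite.biUnion (Set.toFinite _) fun g hg => ?_
      refine Set.Subsingleton.finite ?_
      intro t₁ ht₁ t₂ ht₂
      by_contra hne
      have e1 : ∀ k, h₁ (g • x) k + t₁ * h₂ (g • x) k = h₁ x' k + t₁ * h₂ x' k := by
        intro k; simpa using congrFun ht₁ k
      have e2 : ∀ k, h₁ (g • x) k + t₂ * h₂ (g • x) k = h₁ x' k + t₂ * h₂ x' k := by
        intro k; simpa using congrFun ht₂ k
      have hb : ∀ k, h₂ (g • x) k = h₂ x' k := by
        intro k
        have h0 : (t₁ - t₂) * (h₂ (g • x) k - h₂ x' k) = 0 := by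
          linear_combination e1 k - e2 k
        rcases mul_eq_zero.mp h0 with h0 | h0
        · exact absurd (sub_eq_zero.mp h0) hne
        · exact sub_eq_zero.mp h0
      have ha : ∀ k, h₁ (g • x) k = h₁ x' k := by
        intro k
        have := e1 k
        rw [hb k] at this
        linarith
      exact hg ⟨funext ha, funext hb⟩
    obtain ⟨t, ht⟩ := hUfin.infinite_compl.nonempty
    refine ⟨h₁ + t • h₂, hadd _ m₁ _ (hsmul t h₂ m₂), ?_⟩
    intro g hg3
    by_contra hg
    rw [Set.mem_inter_iff] at hg
    have hgU : t ∈ U := by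
      refine Set.mem_biUnion hg ?_
      have : (h₁ + t • h₂) (g • x) = (h₁ + t • h₂) x' := hg3
      simpa [ContinuousMap.add_apply, ContinuousMap.smul_apply] using this
    exact ht hgU
  have hex : ∃ g : G, ∀ h ∈ F, g ∈ S h := by
    set N : Set ℕ := {n | ∃ h ∈ F, (S h).ncard = n} with hNdef
    obtain ⟨h₀, m₀, hc⟩ := Nat.sInf_mem (s := N) ⟨_, 1, hone, rfl⟩
    have hmin : ∀ h ∈ F, S h₀ ⊆ S h := by
      intro h hh
      obtain ⟨h₃, m₃, hsub⟩ := hdir h₀ m₀ h hh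
      have hle : sInf N ≤ (S h₃).ncard := Nat.sInf_le ⟨h₃, m₃, rfl⟩
      have hsub0 : S h₃ ⊆ S h₀ := fun g hg => (hsub hg).1
      have heq : S h₃ = S h₀ :=
        Set.eq_of_subset_of_ncard_le hsub0 (by rw [hc]; exact hle) (Set.toFinite _)
      intro g hg
      exact (hsub (heq ▸ hg)).2
    obtain ⟨g₀, hg₀⟩ := hSne h₀ m₀
    exact ⟨g₀, fun h hh => hmin h hh hg₀⟩
  obtain ⟨g₀, hg⟩ := hex
  have hgx : ∀ h ∈ F, h (g₀ • x) = h x' := fun h hh => hg h hh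
  have h1 : f (g₀ • x) = f x' := hfs _ _ hgx
  obtain ⟨h₀, m₀, hf0⟩ := hfv x
  have h2 : f x' = h₀ x' := by
    rw [← h1, hfe g₀ x, ← hf0, ← hequiv h₀ m₀ g₀ x, hgx h₀ m₀]
  rw [h2, ← hf0]
  exact hyp h₀ m₀
lemma aux_dense {X : Type*} [TopologicalSpace X] [CompactSpace X] {p : ℕ}
    (F : Set C(X, Fin p → ℝ))
    (hadd : ∀ f ∈ F, ∀ g ∈ F, f + g ∈ F)
    (hsmul : ∀ c : ℝ, ∀ f ∈ F, c • f ∈ F)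
    (hmul : ∀ f ∈ F, ∀ g ∈ F, f * g ∈ F)
    (hone : (1 : C(X, Fin p → ℝ)) ∈ F)
    (f : C(X, Fin p → ℝ))
    (key : ∀ z z' : X × Fin p, (∀ h ∈ F, h z.1 z.2 = h z'.1 z'.2) →
      f z.1 z.2 = f z'.1 z'.2) :
    f ∈ closure F := by
  classical
  let s : Setoid (X × Fin p) :=
    ⟨fun z z' => ∀ h ∈ F, h z.1 z.2 = h z'.1 z'.2,
      ⟨fun z h hh => rfl, fun hzz h hh => (hzz h hh).symm,
        fun h12 h23 h hh => (h12 h hh).trans (h23 h hh)⟩⟩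
  let lift : ∀ h : C(X, Fin p → ℝ), h ∈ F → C(Quotient s, ℝ) := fun h hh =>
    ⟨Quotient.lift (fun z : X × Fin p => h z.1 z.2) (fun a b hab => hab h hh),
      (aux_cont h).quotient_lift _⟩
  let AQ : Subalgebra ℝ C(Quotient s, ℝ) :=
    { carrier := {k | ∃ h ∈ F, ∀ z : X × Fin p, k (Quotient.mk s z) = h z.1 z.2}
      mul_mem' := by
        rintro k₁ k₂ ⟨h₁, m₁, e₁⟩ ⟨h₂, m₂, e₂⟩
        exact ⟨h₁ * h₂, hmul _ m₁ _ m₂, fun z => by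
          rw [ContinuousMap.mul_apply, e₁ z, e₂ z]; rfl⟩
      add_mem' := by
        rintro k₁ k₂ ⟨h₁, m₁, e₁⟩ ⟨h₂, m₂, e₂⟩
        exact ⟨h₁ + h₂, hadd _ m₁ _ m₂, fun z => by
          rw [ContinuousMap.add_apply, e₁ z, e₂ z]; rfl⟩
      one_mem' := ⟨1, hone, fun z => rfl⟩
      zero_mem' := ⟨(0:ℝ) • 1, hsmul 0 1 hone, fun z => by simp⟩
      algebraMap_mem' := fun r =>
        ⟨r • 1, hsmul r 1 hone, fun z => by simp⟩ }
  have hsep : AQ.SeparatesPoints := by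
    intro q q' hqq
    obtain ⟨z, rfl⟩ := Quotient.exists_rep q
    obtain ⟨z', rfl⟩ := Quotient.exists_rep q'
    have hnr : ¬ (∀ h ∈ F, h z.1 z.2 = h z'.1 z'.2) := fun hr => hqq (Quotient.sound hr)
    have : ∃ h ∈ F, h z.1 z.2 ≠ h z'.1 z'.2 := by
      by_contra hc; push_neg at hc; exact hnr hc
    obtain ⟨h, hh, hne⟩ := this
    refine ⟨⇑(lift h hh), ⟨lift h hh, ?_, rfl⟩, ?_⟩
    · exact ⟨h, hh, fun w => rfl⟩
    · exact hne
  have htop := ContinuousMap.subalgebra_topologicalClosure_eq_top_of_separatesPoints AQ hsep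
  let fQ : C(Quotient s, ℝ) :=
    ⟨Quotient.lift (fun z : X × Fin p => f z.1 z.2) (fun a b hab => key a b hab),
      (aux_cont f).quotient_lift _⟩
  have hfQ : fQ ∈ closure (AQ : Set C(Quotient s, ℝ)) := by
    have h1 : fQ ∈ AQ.topologicalClosure := by rw [htop]; exact Algebra.mem_top
    exact h1
  rw [Metric.mem_closure_iff]
  intro ε hε
  rw [Metric.mem_closure_iff] at hfQ
  obtain ⟨k, hkA, hdist⟩ := hfQ ε hε
  obtain ⟨h, hh, hk⟩ := hkA
  refine ⟨h, hh, ?_⟩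
  rw [ContinuousMap.dist_lt_iff hε]
  intro x
  rw [dist_pi_lt_iff hε]
  intro i
  have h2 := (ContinuousMap.dist_lt_iff hε).mp hdist (Quotient.mk s (x, i))
  simpa [fQ, hk (x, i)] using h2
/-- Equivariant Stone-Weierstrass theorem (main abstract version). -/
theorem stmt9 {X G : Type*} [TopologicalSpace X] [CompactSpace X] [Group G] [Finite G]
    [MulAction G X] [ContinuousConstSMul G X] {p : ℕ}
    [MulAction G (Fin p → ℝ)] [ContinuousConstSMul G (Fin p → ℝ)]
    (F : Set C(X, Fin p → ℝ)) (hne : F.Nonempty)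
    (hadd : ∀ f ∈ F, ∀ g ∈ F, f + g ∈ F)
    (hsmul : ∀ c : ℝ, ∀ f ∈ F, c • f ∈ F)
    (hmul : ∀ f ∈ F, ∀ g ∈ F, f * g ∈ F)
    (hone : (1 : C(X, Fin p → ℝ)) ∈ F)
    (hequiv : ∀ f ∈ F, ∀ g : G, ∀ x : X, f (g • x) = g • f x)
    (hscal : ∀ x x' : X,
      (∀ f : C(X, ℝ), (∃ k ∈ F, ∀ z : X, k z = fun _ => f z) → f x = f x') →
      ∀ f ∈ F, MulAction.orbit G (f x) = MulAction.orbit G (f x')) :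
    closure F = {f : C(X, Fin p → ℝ) |
        (∀ g : G, ∀ x : X, f (g • x) = g • f x) ∧
        (∀ x x' : X, (∀ h ∈ F, h x = h x') → f x = f x') ∧
        (∀ x : X, f x ∈ {y : Fin p → ℝ | ∃ h ∈ F, h x = y})} ∧
    ∀ x : X, {y : Fin p → ℝ | ∃ h ∈ F, h x = y} =
      {y : Fin p → ℝ | ∀ i j : Fin p,
        (∀ z : Fin p → ℝ, (∃ h ∈ F, h x = z) → z i = z j) → y i = y j} := by
  classical
  have hpart2 : ∀ x : X, {y : Fin p → ℝ | ∃ h ∈ F, h x = y} =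
      {y : Fin p → ℝ | ∀ i j : Fin p,
        (∀ z : Fin p → ℝ, (∃ h ∈ F, h x = z) → z i = z j) → y i = y j} :=
    fun x => aux_values F hadd hsmul hmul hone x
  refine ⟨?_, hpart2⟩
  apply Set.Subset.antisymm
  · -- closure F ⊆ RHS
    refine closure_minimal ?_ ?_
    · rintro h hh
      exact ⟨hequiv h hh, fun x x' hxx => hxx h hh, fun x => ⟨h, hh, rfl⟩⟩
    · have h1 : IsClosed {f : C(X, Fin p → ℝ) | ∀ g : G, ∀ x : X, f (g • x) = g • f x} := by
        have hrw : {f : C(X, Fin p → ℝ) | ∀ g : G, ∀ x : X, f (g • x) = g • f x}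
            = ⋂ (g : G) (x : X), {f : C(X, Fin p → ℝ) | f (g • x) = g • f x} := by
          ext f; simp only [Set.mem_setOf_eq, Set.mem_iInter]
        rw [hrw]
        exact isClosed_iInter fun g => isClosed_iInter fun x =>
          isClosed_eq (continuous_eval_const _)
            ((continuous_const_smul g).comp (continuous_eval_const _))
      have h2 : IsClosed {f : C(X, Fin p → ℝ) |
          ∀ x x' : X, (∀ h ∈ F, h x = h x') → f x = f x'} := by
        have hrw : {f : C(X, Fin p → ℝ) | ∀ x x' : X, (∀ h ∈ F, h x = h x') → f x = f x'}
            = ⋂ (x : X) (x' : X),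
              {f : C(X, Fin p → ℝ) | (∀ h ∈ F, h x = h x') → f x = f x'} := by
          ext f; simp only [Set.mem_setOf_eq, Set.mem_iInter]
        rw [hrw]
        refine isClosed_iInter fun x => isClosed_iInter fun x' => ?_
        by_cases hxx : ∀ h ∈ F, h x = h x'
        · have hrw2 : {f : C(X, Fin p → ℝ) | (∀ h ∈ F, h x = h x') → f x = f x'}
              = {f : C(X, Fin p → ℝ) | f x = f x'} := by
            ext f
            simp only [Set.mem_setOf_eq]
            exact ⟨fun h => h hxx, fun h _ => h⟩
          rw [hrw2]
          exact isClosed_eq (continuous_eval_const _) (continuous_eval_const _)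
        · have hrw2 : {f : C(X, Fin p → ℝ) | (∀ h ∈ F, h x = h x') → f x = f x'}
              = Set.univ := by
            ext f
            simp only [Set.mem_setOf_eq, Set.mem_univ]
            exact iff_of_true (fun h => absurd h hxx) trivial
          rw [hrw2]; exact isClosed_univ
      have h3 : IsClosed {f : C(X, Fin p → ℝ) |
          ∀ x : X, f x ∈ {y : Fin p → ℝ | ∃ h ∈ F, h x = y}} := by
        have hrw : {f : C(X, Fin p → ℝ) | ∀ x : X, f x ∈ {y : Fin p → ℝ | ∃ h ∈ F, h x = y}}
            = ⋂ (x : X) (i : Fin p) (j : Fin p),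
              {f : C(X, Fin p → ℝ) |
                (∀ z : Fin p → ℝ, (∃ h ∈ F, h x = z) → z i = z j) → f x i = f x j} := by
          ext f
          simp only [Set.mem_setOf_eq, Set.mem_iInter]
          constructor
          · intro hf x i j
            have hx : f x ∈ {y : Fin p → ℝ | ∃ h ∈ F, h x = y} := hf x
            rw [hpart2 x] at hx
            exact hx i j
          · intro hf x
            have hx : f x ∈ {y : Fin p → ℝ | ∀ i j : Fin p,
                (∀ z : Fin p → ℝ, (∃ h ∈ F, h x = z) → z i = z j) → y i = y j} :=
              fun i j => hf x i j
            rw [← hpart2 x] at hx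
            exact hx
        rw [hrw]
        refine isClosed_iInter fun x => isClosed_iInter fun i => isClosed_iInter fun j => ?_
        by_cases hij : ∀ z : Fin p → ℝ, (∃ h ∈ F, h x = z) → z i = z j
        · have hrw2 : {f : C(X, Fin p → ℝ) |
              (∀ z : Fin p → ℝ, (∃ h ∈ F, h x = z) → z i = z j) → f x i = f x j}
              = {f : C(X, Fin p → ℝ) | f x i = f x j} := by
            ext f
            simp only [Set.mem_setOf_eq]
            exact ⟨fun h => h hij, fun h _ => h⟩
          rw [hrw2]
          exact isClosed_eq ((continuous_apply i).comp (continuous_eval_const _))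
            ((continuous_apply j).comp (continuous_eval_const _))
        · have hrw2 : {f : C(X, Fin p → ℝ) |
              (∀ z : Fin p → ℝ, (∃ h ∈ F, h x = z) → z i = z j) → f x i = f x j}
              = Set.univ := by
            ext f
            simp only [Set.mem_setOf_eq, Set.mem_univ]
            exact iff_of_true (fun h => absurd h hij) trivial
          rw [hrw2]; exact isClosed_univ
      have hSS : {f : C(X, Fin p → ℝ) |
          (∀ g : G, ∀ x : X, f (g • x) = g • f x) ∧
          (∀ x x' : X, (∀ h ∈ F, h x = h x') → f x = f x') ∧
          (∀ x : X, f x ∈ {y : Fin p → ℝ | ∃ h ∈ F, h x = y})}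
          = {f : C(X, Fin p → ℝ) | ∀ g : G, ∀ x : X, f (g • x) = g • f x}
            ∩ ({f : C(X, Fin p → ℝ) | ∀ x x' : X, (∀ h ∈ F, h x = h x') → f x = f x'}
              ∩ {f : C(X, Fin p → ℝ) |
                ∀ x : X, f x ∈ {y : Fin p → ℝ | ∃ h ∈ F, h x = y}}) := rfl
      rw [hSS]
      exact h1.inter (h2.inter h3)
  · -- RHS ⊆ closure F
    rintro f ⟨hfe, hfs, hfv⟩
    refine aux_dense F hadd hsmul hmul hone f ?_
    intro z z' hzz
    exact aux_key F hadd hsmul hone hequiv hscal f hfe hfs hfv z.1 z'.1 z.2 z'.2 hzz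
end

section
/- Let X be a compact space, Y = ℝ^p, G a finite group acting continuously on X and on Y, and F a nonempty subalgebra of C_E(X,Y) of equivariant functions. Suppose the set F_scal = {f ∈ C(X,ℝ) : f·1 ∈ F} satisfies: whenever f(x) = f(x') for all f ∈ F_scal, there exists g ∈ G such that h(g·x) = h(x') for all h ∈ F. Then the uniform closure of F equals {f ∈ C_E(X,Y) : sep(F) ⊆ sep(f) and f(x) ∈ closure(F(x)) for all x ∈ X}. -/
open Set

section Aux

variable {X : Type*} [TopologicalSpace X] {p : ℕ}

/-- Pointwise scalar multiplication of a continuous real function on a continuous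
`ℝ^p`-valued function. -/
noncomputable def smulc (ψ : C(X, ℝ)) (k : C(X, Fin p → ℝ)) : C(X, Fin p → ℝ) :=
  ⟨fun x => ψ x • k x, (ψ.continuous.smul k.continuous)⟩

@[simp] lemma smulc_apply (ψ : C(X, ℝ)) (k : C(X, Fin p → ℝ)) (x : X) :
    smulc ψ k x = ψ x • k x := rfl

lemma continuous_smulc_left [CompactSpace X] (k : C(X, Fin p → ℝ)) :
    Continuous fun ψ : C(X, ℝ) => smulc ψ k := by
  rw [Metric.continuous_iff]
  intro ψ ε hε
  refine ⟨ε / (‖k‖ + 1), by positivity, fun ψ' hψ' => ?_⟩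
  have hk1 : (0:ℝ) < ‖k‖ + 1 := by positivity
  have hb : dist (smulc ψ' k) (smulc ψ k) ≤ dist ψ' ψ * (‖k‖ + 1) := by
    refine (ContinuousMap.dist_le (by positivity)).mpr fun x => ?_
    have h1 : dist (ψ' x • k x) (ψ x • k x) = |ψ' x - ψ x| * ‖k x‖ := by
      rw [dist_eq_norm, ← sub_smul, norm_smul, Real.norm_eq_abs]
    rw [smulc_apply, smulc_apply, h1]
    have h2 : |ψ' x - ψ x| ≤ dist ψ' ψ := by
      rw [← Real.dist_eq]; exact ContinuousMap.dist_apply_le_dist x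
    have h3 : ‖k x‖ ≤ ‖k‖ + 1 :=
      (k.norm_coe_le_norm x).trans (by linarith)
    exact mul_le_mul h2 h3 (norm_nonneg _) dist_nonneg
  calc dist (smulc ψ' k) (smulc ψ k) ≤ dist ψ' ψ * (‖k‖ + 1) := hb
    _ < ε / (‖k‖ + 1) * (‖k‖ + 1) := by
        exact mul_lt_mul_of_pos_right hψ' hk1
    _ = ε := div_mul_cancel₀ _ (ne_of_gt hk1)

lemma continuous_smulc_right [CompactSpace X] (ψ : C(X, ℝ)) :
    Continuous fun k : C(X, Fin p → ℝ) => smulc ψ k := by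
  rw [Metric.continuous_iff]
  intro k ε hε
  refine ⟨ε / (‖ψ‖ + 1), by positivity, fun k' hk' => ?_⟩
  have hp1 : (0:ℝ) < ‖ψ‖ + 1 := by positivity
  have hb : dist (smulc ψ k') (smulc ψ k) ≤ (‖ψ‖ + 1) * dist k' k := by
    refine (ContinuousMap.dist_le (by positivity)).mpr fun x => ?_
    have h1 : dist (ψ x • k' x) (ψ x • k x) = |ψ x| * ‖k' x - k x‖ := by
      rw [dist_eq_norm, ← smul_sub, norm_smul, Real.norm_eq_abs]
    rw [smulc_apply, smulc_apply, h1]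
    have h2 : ‖k' x - k x‖ ≤ dist k' k := by
      rw [← dist_eq_norm]; exact ContinuousMap.dist_apply_le_dist x
    have h3 : |ψ x| ≤ ‖ψ‖ + 1 := by
      have := ψ.norm_coe_le_norm x
      rw [Real.norm_eq_abs] at this; linarith
    exact mul_le_mul h3 h2 (norm_nonneg _) (by positivity)
  calc dist (smulc ψ k') (smulc ψ k) ≤ (‖ψ‖ + 1) * dist k' k := hb
    _ < (‖ψ‖ + 1) * (ε / (‖ψ‖ + 1)) := by
        exact mul_lt_mul_of_pos_left hk' hp1
    _ = ε := mul_div_cancel₀ _ (ne_of_gt hp1)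

end Aux

/-- Preliminary version of the equivariant Stone-Weierstrass theorem. -/
theorem stmt10 {X G : Type*} [TopologicalSpace X] [CompactSpace X] [Group G] [Finite G]
    [MulAction G X] [ContinuousConstSMul G X] {p : ℕ}
    [MulAction G (Fin p → ℝ)] [ContinuousConstSMul G (Fin p → ℝ)]
    (F : Set C(X, Fin p → ℝ)) (hne : F.Nonempty)
    (hadd : ∀ f ∈ F, ∀ g ∈ F, f + g ∈ F)
    (hsmul : ∀ c : ℝ, ∀ f ∈ F, c • f ∈ F)
    (hmul : ∀ f ∈ F, ∀ g ∈ F, f * g ∈ F)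
    (hequiv : ∀ f ∈ F, ∀ g : G, ∀ x : X, f (g • x) = g • f x)
    (hscal : ∀ x x' : X,
      (∀ f : C(X, ℝ), (∃ k ∈ F, ∀ z : X, k z = fun _ => f z) → f x = f x') →
      ∃ g : G, ∀ h ∈ F, h (g • x) = h x') :
    closure F = {f : C(X, Fin p → ℝ) |
        (∀ g : G, ∀ x : X, f (g • x) = g • f x) ∧
        (∀ x x' : X, (∀ h ∈ F, h x = h x') → f x = f x') ∧
        (∀ x : X, f x ∈ closure {y : Fin p → ℝ | ∃ h ∈ F, h x = y})} := by
  classical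
  -- the scalar part of `F`
  set Sc : Set C(X, ℝ) := {φ | ∃ k ∈ F, ∀ z : X, k z = fun _ => φ z} with hScdef
  have h0F : (0 : C(X, Fin p → ℝ)) ∈ F := by
    obtain ⟨f₀, hf₀⟩ := hne
    simpa using hsmul 0 f₀ hf₀
  -- closure of F is closed under the operations
  have hcadd : ∀ a ∈ closure F, ∀ b ∈ closure F, a + b ∈ closure F := fun a ha b hb =>
    map_mem_closure₂ continuous_add ha hb hadd
  have hcsmul : ∀ c : ℝ, ∀ a ∈ closure F, c • a ∈ closure F := fun c a ha =>
    map_mem_closure (continuous_const_smul c) ha fun b hb => hsmul c b hb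
  have hcsum : ∀ (s : Finset X) (k : X → C(X, Fin p → ℝ)),
      (∀ i ∈ s, k i ∈ closure F) → (∑ i ∈ s, k i) ∈ closure F := by
    intro s
    induction s using Finset.induction with
    | empty => intro k _; simpa using subset_closure h0F
    | insert _ _ hx ih =>
      intro k hk
      rw [Finset.sum_insert hx]
      exact hcadd _ (hk _ (Finset.mem_insert_self _ _)) _
        (ih k fun i hi => hk i (Finset.mem_insert_of_mem hi))
  -- multiplier property
  have hmulF : ∀ ψ ∈ Algebra.adjoin ℝ Sc, ∀ k ∈ closure F, smulc ψ k ∈ closure F := by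
    intro ψ hψ
    induction hψ using Algebra.adjoin_induction with
    | mem φ hφ =>
      intro k hk
      refine map_mem_closure (continuous_smulc_right φ) hk fun b hb => ?_
      obtain ⟨kφ, hkφF, hkφ⟩ := hφ
      have : smulc φ b = kφ * b := by
        ext x i
        have : kφ x = fun _ => φ x := hkφ x
        simp [this, smul_eq_mul]
      rw [this]
      exact hmul kφ hkφF b hb
    | algebraMap c =>
      intro k hk
      have : smulc (algebraMap ℝ C(X, ℝ) c) k = c • k := by
        ext x i; simp
      rw [this]
      exact hcsmul c k hk
    | add a b _ _ ha hb =>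
      intro k hk
      have : smulc (a + b) k = smulc a k + smulc b k := by
        ext x i; simp [add_smul, add_mul]
      rw [this]
      exact hcadd _ (ha k hk) _ (hb k hk)
    | mul a b _ _ ha hb =>
      intro k hk
      have : smulc (a * b) k = smulc a (smulc b k) := by
        ext x i; simp [mul_smul, mul_assoc]
      rw [this]
      exact ha _ (hb k hk)
  have hmulF' : ∀ ψ ∈ closure (Algebra.adjoin ℝ Sc : Set C(X, ℝ)),
      ∀ k ∈ closure F, smulc ψ k ∈ closure F := by
    intro ψ hψ k hk
    have := map_mem_closure (continuous_smulc_left k) hψ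
      (fun a (ha : a ∈ (Algebra.adjoin ℝ Sc : Set C(X, ℝ))) => hmulF a ha k hk)
    rwa [closure_closure] at this
  apply Set.Subset.antisymm
  · -- easy direction
    apply closure_minimal
    · intro k hk
      refine ⟨fun g x => hequiv k hk g x, fun x x' h => h k hk, fun x => subset_closure ⟨k, hk, rfl⟩⟩
    · have e1 : IsClosed {f : C(X, Fin p → ℝ) | ∀ g : G, ∀ x : X, f (g • x) = g • f x} := by
        have : {f : C(X, Fin p → ℝ) | ∀ g : G, ∀ x : X, f (g • x) = g • f x}
            = ⋂ (g : G), ⋂ (x : X), {f : C(X, Fin p → ℝ) | f (g • x) = g • f x} := by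
          ext f; simp [Set.mem_iInter]
        rw [this]
        refine isClosed_iInter fun g => isClosed_iInter fun x => isClosed_eq ?_ ?_
        · exact ContinuousEvalConst.continuous_eval_const _
        · exact (continuous_const_smul g).comp (ContinuousEvalConst.continuous_eval_const x)
      have e2 : IsClosed {f : C(X, Fin p → ℝ) |
          ∀ x x' : X, (∀ h ∈ F, h x = h x') → f x = f x'} := by
        have : {f : C(X, Fin p → ℝ) | ∀ x x' : X, (∀ h ∈ F, h x = h x') → f x = f x'}
            = ⋂ (x : X), ⋂ (x' : X), ⋂ (_ : ∀ h ∈ F, h x = h x'),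
                {f : C(X, Fin p → ℝ) | f x = f x'} := by
          ext f; simp [Set.mem_iInter]
        rw [this]
        refine isClosed_iInter fun x => isClosed_iInter fun x' => isClosed_iInter fun _ =>
          isClosed_eq ?_ ?_
        · exact ContinuousEvalConst.continuous_eval_const _
        · exact ContinuousEvalConst.continuous_eval_const _
      have e3 : IsClosed {f : C(X, Fin p → ℝ) |
          ∀ x : X, f x ∈ closure {y : Fin p → ℝ | ∃ h ∈ F, h x = y}} := by
        have : {f : C(X, Fin p → ℝ) |
              ∀ x : X, f x ∈ closure {y : Fin p → ℝ | ∃ h ∈ F, h x = y}}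
            = ⋂ (x : X), (fun f : C(X, Fin p → ℝ) => f x) ⁻¹'
                closure {y : Fin p → ℝ | ∃ h ∈ F, h x = y} := by
          ext f; simp [Set.mem_iInter]
        rw [this]
        exact isClosed_iInter fun x =>
          isClosed_closure.preimage (ContinuousEvalConst.continuous_eval_const x)
      rw [show {f : C(X, Fin p → ℝ) |
          (∀ g : G, ∀ x : X, f (g • x) = g • f x) ∧
          (∀ x x' : X, (∀ h ∈ F, h x = h x') → f x = f x') ∧
          (∀ x : X, f x ∈ closure {y : Fin p → ℝ | ∃ h ∈ F, h x = y})}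
          = {f : C(X, Fin p → ℝ) | ∀ g : G, ∀ x : X, f (g • x) = g • f x} ∩
            ({f : C(X, Fin p → ℝ) | ∀ x x' : X, (∀ h ∈ F, h x = h x') → f x = f x'} ∩
             {f : C(X, Fin p → ℝ) |
               ∀ x : X, f x ∈ closure {y : Fin p → ℝ | ∃ h ∈ F, h x = y}})
          from rfl]
      exact e1.inter (e2.inter e3)
  · -- hard direction
    rintro f ⟨hEq, hSep, hPt⟩
    rw [← closure_closure]
    refine Metric.mem_closure_iff.mpr fun ε hε => ?_
    have hε2 : (0:ℝ) < ε/2 := by positivity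
    -- the equivalence relation induced by the scalar part
    let r : Setoid X := ⟨fun x y => ∀ φ ∈ Sc, φ x = φ y,
      ⟨fun x φ _ => rfl, fun h φ hφ => (h φ hφ).symm,
       fun h1 h2 φ hφ => (h1 φ hφ).trans (h2 φ hφ)⟩⟩
    let q : X → Quotient r := Quotient.mk r
    have hqcont : Continuous q := continuous_quotient_mk'
    have hqeq : ∀ {a b : X}, q a = q b → ∀ φ ∈ Sc, φ a = φ b := by
      intro a b hab
      exact Quotient.eq.mp hab
    haveI hT2 : T2Space (Quotient r) := by
      refine ⟨fun {a b} hab => ?_⟩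
      obtain ⟨x, rfl⟩ := Quotient.exists_rep a
      obtain ⟨y, rfl⟩ := Quotient.exists_rep b
      have hr : ¬ (∀ φ ∈ Sc, φ x = φ y) := fun h => hab (Quotient.sound h)
      push_neg at hr
      obtain ⟨φ, hφSc, hφne⟩ := hr
      have hlift : ∀ a b : X, r.r a b → φ a = φ b := fun a b h => h φ hφSc
      have hcont : Continuous (Quotient.lift φ hlift : Quotient r → ℝ) :=
        Continuous.quotient_lift φ.continuous hlift
      exact separated_by_continuous hcont hφne
    -- Step A : good approximants on each class
    have stepA : ∀ x : X, ∃ h ∈ F, ∀ y : X,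
        (∀ φ ∈ Sc, φ x = φ y) → dist (h y) (f y) < ε/2 := by
      intro x
      set O : Set (Fin p → ℝ) :=
        ⋂ (g : G), (fun v => g • v) ⁻¹' Metric.ball (g • f x) (ε/2) with hOdef
      have hOopen : IsOpen O :=
        isOpen_iInter_of_finite fun g =>
          Metric.isOpen_ball.preimage (continuous_const_smul g)
      have hfxO : f x ∈ O := by
        refine mem_iInter.mpr fun g => ?_
        simp [Metric.mem_ball, hε2]
      obtain ⟨v, hvO, hv⟩ := mem_closure_iff.mp (hPt x) O hOopen hfxO
      obtain ⟨h, hhF, hhx⟩ := hv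
      refine ⟨h, hhF, fun y hxy => ?_⟩
      obtain ⟨g, hg⟩ := hscal x y fun φ hφ => hxy φ hφ
      have h1 : h y = g • h x := by rw [← hg h hhF, hequiv h hhF g x]
      have h2 : f y = g • f x := by rw [← hSep (g • x) y hg, hEq g x]
      rw [h1, h2, hhx] at *
      have := mem_iInter.mp hvO g
      simpa [Metric.mem_ball, dist_comm] using this
    choose hfun hfunF hfun_good using stepA
    -- open sets where the approximants are good
    set U : X → Set X := fun x => {y | dist (hfun x y) (f y) < ε/2} with hUdef
    have hUopen : ∀ x, IsOpen (U x) := by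
      intro x
      have : Continuous fun y => dist (hfun x y) (f y) :=
        (hfun x).continuous.dist f.continuous
      exact isOpen_lt this continuous_const
    -- saturated open shrinks, as open sets in the quotient
    set V : X → Set (Quotient r) := fun x => (q '' (U x)ᶜ)ᶜ with hVdef
    have hVopen : ∀ x, IsOpen (V x) := by
      intro x
      have hcc : IsCompact ((U x)ᶜ) := (hUopen x).isClosed_compl.isCompact
      exact ((hcc.image hqcont).isClosed).isOpen_compl
    have hVU : ∀ x : X, q ⁻¹' (V x) ⊆ U x := by
      intro x y hy
      by_contra hyU
      exact hy ⟨y, hyU, rfl⟩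
    have hmemV : ∀ y : X, q y ∈ V y := by
      intro y
      rintro ⟨z, hz, hqz⟩
      exact hz (hfun_good y z fun φ hφ => (hqeq hqz φ hφ).symm)
    -- finite subcover of the quotient
    have hcover : (univ : Set (Quotient r)) ⊆ ⋃ x : X, V x := by
      intro c _
      obtain ⟨y, rfl⟩ := Quotient.exists_rep c
      exact mem_iUnion.mpr ⟨y, hmemV y⟩
    obtain ⟨t, ht⟩ := isCompact_univ.elim_finite_subcover V hVopen hcover
    -- partition of unity on the quotient
    haveI : NormalSpace (Quotient r) := inferInstance
    set ι := {x : X // x ∈ t} with hιdef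
    have hcov' : (univ : Set (Quotient r)) ⊆ ⋃ i : ι, V i.1 := by
      intro c hc
      obtain ⟨x, hxt, hxV⟩ := mem_iUnion₂.mp (ht hc)
      exact mem_iUnion.mpr ⟨⟨x, hxt⟩, hxV⟩
    obtain ⟨W, hWcov, hWopen, hWcl⟩ :=
      exists_subset_iUnion_closure_subset isClosed_univ
        (fun i : ι => hVopen i.1) (fun c _ => Set.toFinite _) hcov'
    have hUry : ∀ i : ι, ∃ Φ : C(Quotient r, ℝ),
        EqOn Φ 0 ((V i.1)ᶜ) ∧ EqOn Φ 1 (closure (W i)) ∧ ∀ c, Φ c ∈ Icc (0:ℝ) 1 := by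
      intro i
      refine exists_continuous_zero_one_of_isClosed (hVopen i.1).isClosed_compl
        isClosed_closure ?_
      rw [Set.disjoint_left]
      intro c hc hc'
      exact hc (hWcl i hc')
    choose Φ hΦ0 hΦ1 hΦ01 using hUry
    set σ : C(Quotient r, ℝ) := ∑ i : ι, Φ i with hσdef
    have hσapp : ∀ c, σ c = ∑ i : ι, Φ i c := by
      intro c; rw [hσdef]; simp
    have hσpos : ∀ c, 0 < σ c := by
      intro c
      obtain ⟨i, hi⟩ := mem_iUnion.mp (hWcov (mem_univ c))
      have h1 : (1:ℝ) ≤ Φ i c := by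
        have := hΦ1 i (subset_closure hi); simp at this; rw [this]
      have : (1:ℝ) ≤ ∑ j : ι, Φ j c := by
        calc (1:ℝ) ≤ Φ i c := h1
          _ ≤ ∑ j : ι, Φ j c :=
            Finset.single_le_sum (fun j _ => (hΦ01 j c).1) (Finset.mem_univ i)
      rw [hσapp]; linarith
    set ψ : ι → C(Quotient r, ℝ) := fun i =>
      ⟨fun c => Φ i c / σ c, (Φ i).continuous.div σ.continuous fun c => ne_of_gt (hσpos c)⟩
      with hψdef
    have hψnonneg : ∀ i c, 0 ≤ ψ i c := fun i c =>
      div_nonneg (hΦ01 i c).1 (hσpos c).le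
    have hψsum : ∀ c, ∑ i : ι, ψ i c = 1 := by
      intro c
      have : ∑ i : ι, ψ i c = (∑ i : ι, Φ i c) / σ c := by
        rw [Finset.sum_div]; rfl
      rw [this, ← hσapp, div_self (ne_of_gt (hσpos c))]
    have hψzero : ∀ (i : ι) (c : Quotient r), c ∉ V i.1 → ψ i c = 0 := by
      intro i c hc
      have : Φ i c = 0 := hΦ0 i hc
      show Φ i c / σ c = 0
      rw [this, zero_div]
    -- the scalar algebra on the quotient separates points, so it is dense
    set qc : C(X, Quotient r) := ⟨q, hqcont⟩ with hqcdef
    set ScQ : Set C(Quotient r, ℝ) := {ψQ | ψQ.comp qc ∈ Sc} with hScQdef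
    have hsep : (Algebra.adjoin ℝ ScQ).SeparatesPoints := by
      intro a b hab
      obtain ⟨x, rfl⟩ := Quotient.exists_rep a
      obtain ⟨y, rfl⟩ := Quotient.exists_rep b
      have hr : ¬ (∀ φ ∈ Sc, φ x = φ y) := fun h => hab (Quotient.sound h)
      push_neg at hr
      obtain ⟨φ, hφSc, hφne⟩ := hr
      have hlift : ∀ a b : X, r.r a b → φ a = φ b := fun a b h => h φ hφSc
      refine ⟨(⟨Quotient.lift φ hlift, Continuous.quotient_lift φ.continuous hlift⟩ :
        C(Quotient r, ℝ)), ?_, hφne⟩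
      refine ⟨_, ⟨Algebra.subset_adjoin ?_, rfl⟩⟩
      show (⟨Quotient.lift φ hlift, _⟩ : C(Quotient r, ℝ)).comp qc ∈ Sc
      have : (⟨Quotient.lift φ hlift, Continuous.quotient_lift φ.continuous hlift⟩ :
          C(Quotient r, ℝ)).comp qc = φ := by
        ext z; rfl
      rw [this]; exact hφSc
    have hdense := ContinuousMap.subalgebra_topologicalClosure_eq_top_of_separatesPoints
      (Algebra.adjoin ℝ ScQ) hsep
    have hψmem : ∀ i : ι, (ψ i : C(Quotient r, ℝ)) ∈
        closure ((Algebra.adjoin ℝ ScQ : Subalgebra ℝ C(Quotient r, ℝ)) :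
          Set C(Quotient r, ℝ)) := by
      intro i
      rw [← Subalgebra.topologicalClosure_coe]
      rw [hdense]
      trivial
    -- pull back along q
    set χ : ι → C(X, ℝ) := fun i => (ψ i).comp qc with hχdef
    have hχmem : ∀ i : ι, χ i ∈ closure (Algebra.adjoin ℝ Sc : Set C(X, ℝ)) := by
      intro i
      show (ψ i).comp qc ∈ closure (Algebra.adjoin ℝ Sc : Set C(X, ℝ))
      refine map_mem_closure (f := fun g : C(Quotient r, ℝ) => g.comp qc)
        (ContinuousMap.continuous_precomp qc) (hψmem i) ?_
      intro a ha
      have h1 : (ContinuousMap.compRightAlgHom ℝ ℝ qc) a ∈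
          (Algebra.adjoin ℝ ScQ).map (ContinuousMap.compRightAlgHom ℝ ℝ qc) :=
        Subalgebra.mem_map.mpr ⟨a, ha, rfl⟩
      rw [AlgHom.map_adjoin] at h1
      have h2 : (ContinuousMap.compRightAlgHom ℝ ℝ qc) '' ScQ ⊆ Sc := by
        rintro _ ⟨b, hb, rfl⟩
        exact hb
      exact Algebra.adjoin_mono h2 h1
    -- assemble the approximant
    set hh : C(X, Fin p → ℝ) := ∑ i : ι, smulc (χ i) (hfun i.1) with hhdef
    have hhmem : hh ∈ closure F := by
      rw [hhdef]
      have : ∀ i : ι, smulc (χ i) (hfun i.1) ∈ closure F := fun i =>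
        hmulF' (χ i) (hχmem i) (hfun i.1) (subset_closure (hfunF i.1))
      -- sum over Finset.univ of ι
      classical
      refine Finset.sum_induction _ (· ∈ closure F) (fun a b ha hb => hcadd a ha b hb)
        (subset_closure h0F) fun i _ => this i
    refine ⟨hh, hhmem, ?_⟩
    have hdistle : dist f hh ≤ ε/2 := by
      refine (ContinuousMap.dist_le hε2.le).mpr fun y => ?_
      have happ : hh y = ∑ i : ι, χ i y • hfun i.1 y := by
        rw [hhdef]; simp
      have hfy : f y = ∑ i : ι, ψ i (q y) • f y := by
        rw [← Finset.sum_smul, hψsum, one_smul]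
      have hχy : ∀ i : ι, χ i y = ψ i (q y) := fun i => rfl
      rw [dist_eq_norm, happ, hfy]
      have : (∑ i : ι, ψ i (q y) • f y) - (∑ i : ι, χ i y • hfun i.1 y)
          = ∑ i : ι, ψ i (q y) • (f y - hfun i.1 y) := by
        rw [← Finset.sum_sub_distrib]
        congr 1
        ext i
        rw [hχy i, smul_sub]
      rw [this]
      calc ‖∑ i : ι, ψ i (q y) • (f y - hfun i.1 y)‖
          ≤ ∑ i : ι, ‖ψ i (q y) • (f y - hfun i.1 y)‖ := norm_sum_le _ _
        _ ≤ ∑ i : ι, ψ i (q y) * (ε/2) := by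
            refine Finset.sum_le_sum fun i _ => ?_
            rw [norm_smul, Real.norm_eq_abs, abs_of_nonneg (hψnonneg i (q y))]
            rcases eq_or_lt_of_le (hψnonneg i (q y)) with h0 | h0
            · rw [← h0]; simp
            · have hyV : q y ∈ V i.1 := by
                by_contra hc
                exact absurd (hψzero i (q y) hc) (ne_of_gt h0)
              have hyU : y ∈ U i.1 := hVU i.1 hyV
              have : dist (hfun i.1 y) (f y) < ε/2 := hyU
              have hn : ‖f y - hfun i.1 y‖ ≤ ε/2 := by
                rw [← dist_eq_norm, dist_comm]
                exact this.le
              exact mul_le_mul_of_nonneg_left hn (hψnonneg i (q y))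
        _ = (∑ i : ι, ψ i (q y)) * (ε/2) := by rw [Finset.sum_mul]
        _ = ε/2 := by rw [hψsum, one_mul]
    calc dist f hh ≤ ε/2 := hdistle
      _ < ε := by linarith
end

section
/- Let X be a compact space, Y = ℝ^p, G a finite group acting continuously on X, and F ⊆ C_I(X,Y) a nonempty set of G-invariant continuous functions. Assume that for every continuous h : ℝ^p × ℝ^p → ℝ^p and f, g ∈ F, the function x ↦ h(f(x), g(x)) belongs to F. Then the uniform closure of F equals {f ∈ C_I(X,Y) : sep(F) ⊆ sep(f)}. -/
section Aux

variable {X : Type*} [TopologicalSpace X] {p : ℕ} {F : Set C(X, Fin p → ℝ)}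

private lemma contInf : Continuous fun ab : (Fin p → ℝ) × (Fin p → ℝ) => ab.1 ⊓ ab.2 := by
  refine continuous_pi fun i => ?_
  simp only [Pi.inf_apply]
  exact ((continuous_apply i).comp continuous_fst).inf ((continuous_apply i).comp continuous_snd)

private lemma contSup : Continuous fun ab : (Fin p → ℝ) × (Fin p → ℝ) => ab.1 ⊔ ab.2 := by
  refine continuous_pi fun i => ?_
  simp only [Pi.sup_apply]
  exact ((continuous_apply i).comp continuous_fst).sup ((continuous_apply i).comp continuous_snd)

private lemma auxInf
    (hpost : ∀ h : C((Fin p → ℝ) × (Fin p → ℝ), Fin p → ℝ), ∀ f ∈ F, ∀ g ∈ F,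
      ∀ k : C(X, Fin p → ℝ), (∀ x : X, k x = h (f x, g x)) → k ∈ F)
    {ι : Type*} (s : Finset ι) (hs : s.Nonempty) (g : ι → C(X, Fin p → ℝ))
    (hg : ∀ j ∈ s, g j ∈ F) :
    ∃ G ∈ F, (∀ y i, ∀ j ∈ s, G y i ≤ g j y i) ∧ (∀ y i, ∃ j ∈ s, G y i = g j y i) := by
  induction s using Finset.cons_induction with
  | empty => exact absurd hs (by simp)
  | cons j s hj ih =>
    rcases s.eq_empty_or_nonempty with rfl | hsne
    · refine ⟨g j, hg j (by simp), fun y i j' hj' => ?_, fun y i => ⟨j, by simp, rfl⟩⟩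
      simp only [Finset.cons_empty, Finset.mem_singleton] at hj'
      subst hj'; exact le_refl _
    · obtain ⟨G', hG'F, hG'1, hG'2⟩ := ih hsne (fun j' hj' => hg j' (Finset.mem_cons_of_mem hj'))
      have hgj : g j ∈ F := hg j (Finset.mem_cons_self j s)
      set G : C(X, Fin p → ℝ) :=
        ⟨fun y => g j y ⊓ G' y, contInf.comp ((g j).continuous.prodMk G'.continuous)⟩ with hGdef
      refine ⟨G, hpost ⟨_, contInf⟩ (g j) hgj G' hG'F G (fun x => rfl), ?_, ?_⟩
      · intro y i j' hj'
        rcases Finset.mem_cons.mp hj' with rfl | hj's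
        · exact inf_le_left (a := g j' y i) (b := G' y i)
        · exact le_trans (inf_le_right (a := g j y i) (b := G' y i)) (hG'1 y i j' hj's)
      · intro y i
        rcases le_total (g j y i) (G' y i) with h | h
        · exact ⟨j, Finset.mem_cons_self j s, inf_eq_left.mpr h⟩
        · obtain ⟨j', hj', he⟩ := hG'2 y i
          exact ⟨j', Finset.mem_cons_of_mem hj', (inf_eq_right.mpr h).trans he⟩

private lemma auxSup
    (hpost : ∀ h : C((Fin p → ℝ) × (Fin p → ℝ), Fin p → ℝ), ∀ f ∈ F, ∀ g ∈ F,
      ∀ k : C(X, Fin p → ℝ), (∀ x : X, k x = h (f x, g x)) → k ∈ F)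
    {ι : Type*} (s : Finset ι) (hs : s.Nonempty) (g : ι → C(X, Fin p → ℝ))
    (hg : ∀ j ∈ s, g j ∈ F) :
    ∃ G ∈ F, (∀ y i, ∀ j ∈ s, g j y i ≤ G y i) ∧ (∀ y i, ∃ j ∈ s, G y i = g j y i) := by
  induction s using Finset.cons_induction with
  | empty => exact absurd hs (by simp)
  | cons j s hj ih =>
    rcases s.eq_empty_or_nonempty with rfl | hsne
    · refine ⟨g j, hg j (by simp), fun y i j' hj' => ?_, fun y i => ⟨j, by simp, rfl⟩⟩
      simp only [Finset.cons_empty, Finset.mem_singleton] at hj'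
      subst hj'; exact le_refl _
    · obtain ⟨G', hG'F, hG'1, hG'2⟩ := ih hsne (fun j' hj' => hg j' (Finset.mem_cons_of_mem hj'))
      have hgj : g j ∈ F := hg j (Finset.mem_cons_self j s)
      set G : C(X, Fin p → ℝ) :=
        ⟨fun y => g j y ⊔ G' y, contSup.comp ((g j).continuous.prodMk G'.continuous)⟩ with hGdef
      refine ⟨G, hpost ⟨_, contSup⟩ (g j) hgj G' hG'F G (fun x => rfl), ?_, ?_⟩
      · intro y i j' hj'
        rcases Finset.mem_cons.mp hj' with rfl | hj's
        · exact le_sup_left (a := g j' y i) (b := G' y i)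
        · exact le_trans (hG'1 y i j' hj's) (le_sup_right (a := g j y i) (b := G' y i))
      · intro y i
        rcases le_total (G' y i) (g j y i) with h | h
        · exact ⟨j, Finset.mem_cons_self j s, sup_eq_left.mpr h⟩
        · obtain ⟨j', hj', he⟩ := hG'2 y i
          exact ⟨j', Finset.mem_cons_of_mem hj', (sup_eq_right.mpr h).trans he⟩

end Aux

/-- Invariant Stone-Weierstrass theorem for post-composition-closed classes. -/
theorem stmt11 {X G : Type*} [TopologicalSpace X] [CompactSpace X] [Group G] [Finite G]
    [MulAction G X] [ContinuousConstSMul G X] {p : ℕ}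
    (F : Set C(X, Fin p → ℝ)) (hne : F.Nonempty)
    (hinv : ∀ f ∈ F, ∀ g : G, ∀ x : X, f (g • x) = f x)
    (hpost : ∀ h : C((Fin p → ℝ) × (Fin p → ℝ), Fin p → ℝ), ∀ f ∈ F, ∀ g ∈ F,
      ∀ k : C(X, Fin p → ℝ), (∀ x : X, k x = h (f x, g x)) → k ∈ F) :
    closure F = {f : C(X, Fin p → ℝ) |
        (∀ g : G, ∀ x : X, f (g • x) = f x) ∧
        ∀ x x' : X, (∀ h ∈ F, h x = h x') → f x = f x'} := by
  obtain ⟨f₀, hf₀⟩ := hne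
  apply Set.Subset.antisymm
  · apply closure_minimal
    · intro k hk
      exact ⟨hinv k hk, fun x x' h => h k hk⟩
    · rw [Set.setOf_and]
      apply IsClosed.inter
      · have he : {f : C(X, Fin p → ℝ) | ∀ g : G, ∀ x : X, f (g • x) = f x}
            = ⋂ (g : G) (x : X), {f : C(X, Fin p → ℝ) | f (g • x) = f x} := by
          ext f; simp [Set.mem_iInter]
        rw [he]
        exact isClosed_iInter fun g => isClosed_iInter fun x =>
          isClosed_eq (continuous_eval_const _) (continuous_eval_const _)
      · have he : {f : C(X, Fin p → ℝ) | ∀ x x' : X, (∀ h ∈ F, h x = h x') → f x = f x'}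
            = ⋂ (x : X) (x' : X) (_ : ∀ h ∈ F, h x = h x'),
                {f : C(X, Fin p → ℝ) | f x = f x'} := by
          ext f; simp [Set.mem_iInter]
        rw [he]
        exact isClosed_iInter fun x => isClosed_iInter fun x' => isClosed_iInter fun _ =>
          isClosed_eq (continuous_eval_const _) (continuous_eval_const _)
  · rintro f ⟨hfinv, hfsep⟩
    -- key two-point interpolation
    have key : ∀ x x' : X, ∃ g ∈ F, g x = f x ∧ g x' = f x' := by
      intro x x'
      by_cases hsep : ∀ h ∈ F, h x = h x'
      · refine ⟨ContinuousMap.const X (f x),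
          hpost (ContinuousMap.const _ (f x)) f₀ hf₀ f₀ hf₀ _ (fun y => rfl), rfl, ?_⟩
        exact hfsep x x' hsep
      · push_neg at hsep
        obtain ⟨h₀, hh₀, hne'⟩ := hsep
        obtain ⟨i, hi⟩ := Function.ne_iff.mp hne'
        set a := h₀ x i with ha
        set b := h₀ x' i with hb
        have hba : b - a ≠ 0 := sub_ne_zero_of_ne (Ne.symm hi)
        set A : C(ℝ, Fin p → ℝ) :=
          ⟨fun t => f x + ((t - a) / (b - a)) • (f x' - f x), by
            exact continuous_const.add
              (((continuous_id.sub continuous_const).div_const _).smul continuous_const)⟩ with hA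
        have hAa : A a = f x := by
          simp [hA, sub_self, zero_div]
        have hAb : A b = f x' := by
          simp only [hA, ContinuousMap.coe_mk, div_self hba, one_smul]
          abel
        refine ⟨⟨fun y => A (h₀ y i), A.continuous.comp ((continuous_apply i).comp h₀.continuous)⟩,
          hpost ⟨fun uv => A (uv.1 i), A.continuous.comp ((continuous_apply i).comp continuous_fst)⟩
            h₀ hh₀ h₀ hh₀ _ (fun y => rfl), hAa, hAb⟩
    rw [Metric.mem_closure_iff]
    intro ε hε
    cases isEmpty_or_nonempty X with
    | inl hX =>
      exact ⟨f₀, hf₀, (ContinuousMap.dist_lt_iff hε).mpr fun x => isEmptyElim x⟩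
    | inr hX =>
      -- Step 1: for each x, a function in F equal to f at x and < f + ε everywhere
      have step1 : ∀ x : X, ∃ g ∈ F, g x = f x ∧ ∀ y, ∀ i, g y i < f y i + ε := by
        intro x
        choose g hgF hg1 hg2 using key x
        set U : X → Set X := fun x' => {y | ∀ i, g x' y i < f y i + ε} with hU
        have hUopen : ∀ x', IsOpen (U x') := by
          intro x'
          have : U x' = ⋂ i, {y | g x' y i < f y i + ε} := by ext y; simp [hU]
          rw [this]
          exact isOpen_iInter_of_finite fun i =>
            isOpen_lt ((continuous_apply i).comp (g x').continuous)
              (((continuous_apply i).comp f.continuous).add continuous_const)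
        have hUmem : ∀ x', x' ∈ U x' := fun x' i => by rw [hg2]; linarith
        obtain ⟨s, hscov⟩ := isCompact_univ.elim_finite_subcover U hUopen
          (fun y _ => Set.mem_iUnion.mpr ⟨y, hUmem y⟩)
        have hsne : s.Nonempty := by
          obtain ⟨y₀⟩ := hX
          have := hscov (Set.mem_univ y₀)
          simp only [Set.mem_iUnion] at this
          obtain ⟨j, hj, -⟩ := this
          exact ⟨j, hj⟩
        obtain ⟨Gm, hGmF, hGm1, hGm2⟩ := auxInf hpost s hsne g (fun j _ => hgF j)
        refine ⟨Gm, hGmF, ?_, ?_⟩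
        · funext i
          obtain ⟨j, hj, he⟩ := hGm2 x i
          rw [he, hg1 j]
        · intro y i
          have := hscov (Set.mem_univ y)
          simp only [Set.mem_iUnion] at this
          obtain ⟨j, hj, hyU⟩ := this
          exact lt_of_le_of_lt (hGm1 y i j hj) (hyU i)
      choose g2 hg2F hg2x hg2b using step1
      set V : X → Set X := fun x => {y | ∀ i, f y i - ε < g2 x y i} with hV
      have hVopen : ∀ x, IsOpen (V x) := by
        intro x
        have : V x = ⋂ i, {y | f y i - ε < g2 x y i} := by ext y; simp [hV]
        rw [this]
        exact isOpen_iInter_of_finite fun i =>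
          isOpen_lt (((continuous_apply i).comp f.continuous).sub continuous_const)
            ((continuous_apply i).comp (g2 x).continuous)
      have hVmem : ∀ x, x ∈ V x := fun x i => by rw [hg2x]; linarith
      obtain ⟨t, htcov⟩ := isCompact_univ.elim_finite_subcover V hVopen
        (fun y _ => Set.mem_iUnion.mpr ⟨y, hVmem y⟩)
      have htne : t.Nonempty := by
        obtain ⟨y₀⟩ := hX
        have := htcov (Set.mem_univ y₀)
        simp only [Set.mem_iUnion] at this
        obtain ⟨j, hj, -⟩ := this
        exact ⟨j, hj⟩
      obtain ⟨Gf, hGfF, hGf1, hGf2⟩ := auxSup hpost t htne g2 (fun j _ => hg2F j)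
      have hub : ∀ y i, Gf y i < f y i + ε := by
        intro y i
        obtain ⟨j, hj, he⟩ := hGf2 y i
        rw [he]; exact hg2b j y i
      have hlb : ∀ y i, f y i - ε < Gf y i := by
        intro y i
        have := htcov (Set.mem_univ y)
        simp only [Set.mem_iUnion] at this
        obtain ⟨j, hj, hyV⟩ := this
        exact lt_of_lt_of_le (hyV i) (hGf1 y i j hj)
      refine ⟨Gf, hGfF, (ContinuousMap.dist_lt_iff hε).mpr fun y => (dist_pi_lt_iff hε).mpr fun i => ?_⟩
      rw [Real.dist_eq]
      have h1 := hub y i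
      have h2 := hlb y i
      exact abs_lt.mpr ⟨by linarith, by linarith⟩
end

section
/- Let X be a compact space, 𝔽 = ℝ^p, Y = 𝔽^n, and G = S_n the symmetric group acting continuously on X and on 𝔽^n by permuting the n blocks. Let F ⊆ C_E(X, 𝔽^n) be nonempty and satisfy: (1) for every continuous h : 𝔽 × 𝔽 → 𝔽 and f, g ∈ F, the function x ↦ (h(f(x)_1, g(x)_1), …, h(f(x)_n, g(x)_n)) is in F; (2) for every f ∈ F, the function x ↦ (Σᵢ f(x)_i, …, Σᵢ f(x)_i) is in F. Then the uniform closure of F equals {f ∈ C_E(X, 𝔽^n) : sep(F) ⊆ sep(f)}. -/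
open Finset

lemma exists_cont_prescribe {E : Type*} [MetricSpace E] {p : ℕ}
    (s : Finset E) (v : E → (Fin p → ℝ)) :
    ∃ θ : C(E, Fin p → ℝ), ∀ z ∈ s, θ z = v z := by
  classical
  set T : Finset ℝ :=
    ((s ×ˢ s).filter fun ab => ab.1 ≠ ab.2).image fun ab => dist ab.1 ab.2 with hT
  set δ : ℝ := if h : T.Nonempty then min (T.min' h) 1 else 1 with hδdef
  have hδpos : 0 < δ := by
    rw [hδdef]
    split_ifs with h
    · refine lt_min ?_ one_pos
      have hTpos : ∀ r ∈ T, 0 < r := by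
        intro r hr
        rw [hT] at hr
        simp only [mem_image, mem_filter, mem_product] at hr
        obtain ⟨ab, ⟨_, hne⟩, heq⟩ := hr
        rw [← heq]
        exact dist_pos.2 hne
      exact hTpos _ (T.min'_mem h)
    · exact one_pos
  have hδle : ∀ a ∈ s, ∀ b ∈ s, a ≠ b → δ ≤ dist a b := by
    intro a ha b hb hab
    have hmem : dist a b ∈ T := by
      rw [hT]
      exact mem_image.2 ⟨(a, b), mem_filter.2 ⟨mem_product.2 ⟨ha, hb⟩, hab⟩, rfl⟩
    have hTne : T.Nonempty := ⟨_, hmem⟩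
    rw [hδdef, dif_pos hTne]
    exact le_trans (min_le_left _ _) (T.min'_le _ hmem)
  refine ⟨⟨fun z => ∑ z₀ ∈ s, (max 0 (1 - dist z z₀ / δ)) • v z₀, ?_⟩, ?_⟩
  · refine continuous_finset_sum _ fun z₀ _ => Continuous.fun_smul ?_ continuous_const
    exact continuous_const.max
      (continuous_const.sub ((continuous_id.dist continuous_const).div_const δ))
  · intro z hz
    simp only [ContinuousMap.coe_mk]
    rw [Finset.sum_eq_single z]
    · simp [dist_self]
    · intro b hb hbz
      have h1le : (1 : ℝ) ≤ dist z b / δ :=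
        (one_le_div hδpos).2 (hδle z hz b hb (Ne.symm hbz))
      have : max 0 (1 - dist z b / δ) = 0 := max_eq_left (by linarith)
      rw [this, zero_smul]
    · intro h; exact absurd hz h



lemma perm_of_counts {n : ℕ} (u v : Fin n → ℕ)
    (h : ∀ a, (Finset.univ.filter fun i => u i = a).card
            = (Finset.univ.filter fun i => v i = a).card) :
    ∃ σ : Equiv.Perm (Fin n), ∀ i, u i = v (σ i) := by
  classical
  have hm : Multiset.map u Finset.univ.val = Multiset.map v Finset.univ.val := by
    ext a
    rw [Multiset.count_map, Multiset.count_map]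
    have ha := h a
    have e1 : Multiset.filter (fun i => a = u i) Finset.univ.val
        = (Finset.univ.filter fun i => u i = a).val := by
      rw [Finset.filter_val]; exact Multiset.filter_congr (fun i _ => eq_comm)
    have e2 : Multiset.filter (fun i => a = v i) Finset.univ.val
        = (Finset.univ.filter fun i => v i = a).val := by
      rw [Finset.filter_val]; exact Multiset.filter_congr (fun i _ => eq_comm)
    rw [e1, e2]
    exact ha
  -- turn into list perm
  have hperm : List.Perm (List.ofFn u) (List.ofFn v) := by
    have huval : (Finset.univ : Finset (Fin n)).val = ↑(List.finRange n) := rfl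
    rw [huval, Multiset.map_coe, Multiset.map_coe, Multiset.coe_eq_coe] at hm
    rw [List.ofFn_eq_map, List.ofFn_eq_map]
    exact hm
  have hperm2 : List.Perm (List.ofFn (u ∘ Tuple.sort u)) (List.ofFn (v ∘ Tuple.sort v)) :=
    ((Tuple.sort u).ofFn_comp_perm u).trans
      (hperm.trans ((Tuple.sort v).ofFn_comp_perm v).symm)
  have heq : u ∘ Tuple.sort u = v ∘ Tuple.sort v := by
    apply List.ofFn_injective
    exact List.Perm.eq_of_sortedLE
      (Tuple.monotone_sort u).sortedLE_ofFn (Tuple.monotone_sort v).sortedLE_ofFn hperm2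
  refine ⟨((Tuple.sort u)⁻¹).trans (Tuple.sort v), fun i => ?_⟩
  have := congrFun heq ((Tuple.sort u)⁻¹ i)
  simpa using this


lemma finset_inf_mem {X : Type*} [TopologicalSpace X] {n p : ℕ}
    (F : Set C(X, Fin n → Fin p → ℝ))
    (hmin : ∀ g ∈ F, ∀ g' ∈ F, ∃ k ∈ F, ∀ z i c, k z i c = min (g z i c) (g' z i c))
    {ι : Type*} (T : Finset ι) (hT : T.Nonempty) (G : ι → C(X, Fin n → Fin p → ℝ))
    (hG : ∀ a ∈ T, G a ∈ F) :
    ∃ k ∈ F, ∀ z i c, k z i c = T.inf' hT (fun a => G a z i c) := by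
  classical
  induction hT using Finset.Nonempty.cons_induction with
  | singleton a => exact ⟨G a, hG a (by simp), fun z i c => by simp⟩
  | cons a T ha hT ih =>
    obtain ⟨k, hkF, hk⟩ := ih (fun b hb => hG b (by simp [hb]))
    obtain ⟨k', hk'F, hk'⟩ := hmin (G a) (hG a (by simp)) k hkF
    refine ⟨k', hk'F, fun z i c => ?_⟩
    rw [hk' z i c, hk z i c, Finset.inf'_cons]

lemma finset_sup_mem {X : Type*} [TopologicalSpace X] {n p : ℕ}
    (F : Set C(X, Fin n → Fin p → ℝ))
    (hmax : ∀ g ∈ F, ∀ g' ∈ F, ∃ k ∈ F, ∀ z i c, k z i c = max (g z i c) (g' z i c))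
    {ι : Type*} (T : Finset ι) (hT : T.Nonempty) (G : ι → C(X, Fin n → Fin p → ℝ))
    (hG : ∀ a ∈ T, G a ∈ F) :
    ∃ k ∈ F, ∀ z i c, k z i c = T.sup' hT (fun a => G a z i c) := by
  classical
  induction hT using Finset.Nonempty.cons_induction with
  | singleton a => exact ⟨G a, hG a (by simp), fun z i c => by simp⟩
  | cons a T ha hT ih =>
    obtain ⟨k, hkF, hk⟩ := ih (fun b hb => hG b (by simp [hb]))
    obtain ⟨k', hk'F, hk'⟩ := hmax (G a) (hG a (by simp)) k hkF
    refine ⟨k', hk'F, fun z i c => ?_⟩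
    rw [hk' z i c, hk z i c, Finset.sup'_cons]

lemma lattice_approx {X : Type*} [TopologicalSpace X] [CompactSpace X] {n p : ℕ}
    (F : Set C(X, Fin n → Fin p → ℝ)) (hne : F.Nonempty)
    (hmax : ∀ g ∈ F, ∀ g' ∈ F, ∃ k ∈ F, ∀ z i c, k z i c = max (g z i c) (g' z i c))
    (hmin : ∀ g ∈ F, ∀ g' ∈ F, ∃ k ∈ F, ∀ z i c, k z i c = min (g z i c) (g' z i c))
    (f : C(X, Fin n → Fin p → ℝ))
    (hsep : ∀ x x' : X, ∃ g ∈ F, g x = f x ∧ g x' = f x') :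
    f ∈ closure F := by
  classical
  by_cases hX : IsEmpty X
  · obtain ⟨g, hg⟩ := hne
    have : f = g := ContinuousMap.ext fun z => (hX.false z).elim
    exact this ▸ subset_closure hg
  rw [not_isEmpty_iff] at hX
  rw [Metric.mem_closure_iff]
  intro ε hε
  choose g hgF hgx hgx' using hsep
  -- step 1 : for each x, a function in F below f + ε everywhere, equal to f at x
  have key : ∀ x : X, ∃ k ∈ F, (∀ z i c, k z i c < f z i c + ε) ∧ (k x = f x) := by
    intro x
    set U : X → Set X := fun x' => {z | ∀ i c, g x x' z i c < f z i c + ε} with hU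
    have hUopen : ∀ x', IsOpen (U x') := by
      intro x'
      have : U x' = ⋂ i, ⋂ c, {z | g x x' z i c < f z i c + ε} := by
        ext z; simp [hU, Set.mem_iInter]
      rw [this]
      refine isOpen_iInter_of_finite fun i => isOpen_iInter_of_finite fun c => ?_
      exact isOpen_lt
        ((continuous_apply c).comp ((continuous_apply i).comp (map_continuous _)))
        (((continuous_apply c).comp ((continuous_apply i).comp (map_continuous f))).add
          continuous_const)
    have hcover : (Set.univ : Set X) ⊆ ⋃ x', U x' := by
      intro z _
      refine Set.mem_iUnion.2 ⟨z, fun i c => ?_⟩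
      rw [hgx' x z]
      linarith
    obtain ⟨T, hT⟩ := isCompact_univ.elim_finite_subcover U hUopen hcover
    have hTne : T.Nonempty := by
      obtain ⟨x₀⟩ := hX
      obtain ⟨x', hx'T, _⟩ := Set.mem_iUnion₂.1 (hT (Set.mem_univ x₀))
      exact ⟨x', hx'T⟩
    obtain ⟨k, hkF, hk⟩ := finset_inf_mem F hmin T hTne (fun x' => g x x') (fun a _ => hgF x a)
    refine ⟨k, hkF, fun z i c => ?_, ?_⟩
    · obtain ⟨x', hx'T, hzU⟩ := Set.mem_iUnion₂.1 (hT (Set.mem_univ z))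
      calc k z i c ≤ g x x' z i c := hk z i c ▸ Finset.inf'_le _ hx'T
        _ < f z i c + ε := hzU i c
    · funext i c
      rw [hk x i c]
      have : ∀ x' ∈ T, g x x' x i c = f x i c := fun x' _ => by rw [hgx x x']
      rw [Finset.inf'_congr (H := hTne) rfl this, Finset.inf'_const]
  -- step 2
  choose h hF hlt heq using key
  set V : X → Set X := fun x => {z | ∀ i c, f z i c - ε < h x z i c} with hV
  have hVopen : ∀ x, IsOpen (V x) := by
    intro x
    have : V x = ⋂ i, ⋂ c, {z | f z i c - ε < h x z i c} := by
      ext z; simp [hV, Set.mem_iInter]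
    rw [this]
    refine isOpen_iInter_of_finite fun i => isOpen_iInter_of_finite fun c => ?_
    exact isOpen_lt
      (((continuous_apply c).comp ((continuous_apply i).comp (map_continuous f))).sub
        continuous_const)
      ((continuous_apply c).comp ((continuous_apply i).comp (map_continuous _)))
  have hcover : (Set.univ : Set X) ⊆ ⋃ x, V x := by
    intro z _
    refine Set.mem_iUnion.2 ⟨z, fun i c => ?_⟩
    rw [heq z]
    linarith
  obtain ⟨T, hT⟩ := isCompact_univ.elim_finite_subcover V hVopen hcover
  have hTne : T.Nonempty := by
    obtain ⟨x₀⟩ := hX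
    obtain ⟨x', hx'T, _⟩ := Set.mem_iUnion₂.1 (hT (Set.mem_univ x₀))
    exact ⟨x', hx'T⟩
  obtain ⟨K, hKF, hK⟩ := finset_sup_mem F hmax T hTne h (fun a _ => hF a)
  refine ⟨K, hKF, ?_⟩
  rw [ContinuousMap.dist_lt_iff hε]
  intro z
  rw [dist_pi_lt_iff hε]
  intro i
  rw [dist_pi_lt_iff hε]
  intro c
  rw [Real.dist_eq, abs_sub_lt_iff]
  constructor
  · -- f z i c - K z i c < ε
    obtain ⟨x', hx'T, hzV⟩ := Set.mem_iUnion₂.1 (hT (Set.mem_univ z))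
    have h1 : f z i c - ε < h x' z i c := hzV i c
    have h2 : h x' z i c ≤ K z i c := hK z i c ▸ Finset.le_sup' (fun a => h a z i c) hx'T
    linarith
  · -- K z i c - f z i c < ε
    have h3 : K z i c < f z i c + ε := by
      rw [hK z i c]
      rw [Finset.sup'_lt_iff]
      intro x' _
      exact hlt x' z i c
    linarith

section
variable {X : Type*} [TopologicalSpace X] {n p : ℕ}
  [MulAction (Equiv.Perm (Fin n)) X]

lemma two_point
    (F : Set C(X, Fin n → Fin p → ℝ)) (hne : F.Nonempty)
    (hequiv : ∀ f ∈ F, ∀ σ : Equiv.Perm (Fin n), ∀ x : X, ∀ i : Fin n,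
      f (σ • x) i = f x (σ⁻¹ i))
    (h1 : ∀ h : C((Fin p → ℝ) × (Fin p → ℝ), Fin p → ℝ), ∀ f ∈ F, ∀ g ∈ F,
      ∀ k : C(X, Fin n → Fin p → ℝ),
        (∀ x : X, ∀ i : Fin n, k x i = h (f x i, g x i)) → k ∈ F)
    (h2 : ∀ f ∈ F, ∀ k : C(X, Fin n → Fin p → ℝ),
      (∀ x : X, ∀ i : Fin n, k x i = ∑ j : Fin n, f x j) → k ∈ F)
    (hp : p ≠ 0)
    (f : C(X, Fin n → Fin p → ℝ))
    (hfe : ∀ σ : Equiv.Perm (Fin n), ∀ x : X, ∀ i : Fin n, f (σ • x) i = f x (σ⁻¹ i))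
    (hfs : ∀ x x' : X, (∀ h ∈ F, h x = h x') → f x = f x')
    (x x' : X) :
    ∃ k ∈ F, k x = f x ∧ k x' = f x' := by
  classical
  set y : Bool → X := fun b => cond b x' x with hy
  set ev : C(X, Fin n → Fin p → ℝ) → Bool × Fin n → (Fin p → ℝ) :=
    fun g s => g (y s.1) s.2 with hev
  set rel : Bool × Fin n → Bool × Fin n → Prop :=
    fun s t => ∀ g ∈ F, ev g s = ev g t with hrel
  have c₀ : Fin p := ⟨0, Nat.pos_of_ne_zero hp⟩
  -- composing with binary continuous maps
  have hcomp : ∀ θ : C((Fin p → ℝ) × (Fin p → ℝ), Fin p → ℝ), ∀ g ∈ F, ∀ g' ∈ F,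
      ∃ k ∈ F, ∀ z i, k z i = θ (g z i, g' z i) := by
    intro θ g hg g' hg'
    have hcont : Continuous fun z : X => fun i => θ (g z i, g' z i) := by
      refine continuous_pi fun i => θ.continuous.comp ?_
      exact ((continuous_apply i).comp (map_continuous g)).prodMk
        ((continuous_apply i).comp (map_continuous g'))
    exact ⟨⟨_, hcont⟩, h1 θ g hg g' hg' ⟨_, hcont⟩ (fun z i => rfl), fun z i => rfl⟩
  have hcomp1 : ∀ θ : C(Fin p → ℝ, Fin p → ℝ), ∀ g ∈ F,
      ∃ k ∈ F, ∀ z i, k z i = θ (g z i) := by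
    intro θ g hg
    obtain ⟨k, hkF, hk⟩ := hcomp (θ.comp ⟨Prod.fst, continuous_fst⟩) g hg g hg
    exact ⟨k, hkF, fun z i => hk z i⟩
  have hpool : ∀ g ∈ F, ∃ k ∈ F, ∀ z i, k z i = ∑ j, g z j := by
    intro g hg
    have hcont : Continuous fun z : X => fun i : Fin n => ∑ j, g z j := by
      refine continuous_pi fun i => ?_
      exact continuous_finset_sum _ fun j _ => (continuous_apply j).comp (map_continuous g)
    exact ⟨⟨_, hcont⟩, h2 g hg ⟨_, hcont⟩ (fun z i => rfl), fun z i => rfl⟩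
  -- construct g₀ faithful on slots
  have sep_pairs : ∀ Q : Finset ((Bool × Fin n) × (Bool × Fin n)),
      ∃ g ∈ F, ∀ st ∈ Q, ¬ rel st.1 st.2 → ev g st.1 ≠ ev g st.2 := by
    intro Q
    induction Q using Finset.induction_on with
    | empty => exact ⟨hne.choose, hne.choose_spec, by simp⟩
    | @insert a Q haQ ih =>
      obtain ⟨g, hg, hgQ⟩ := ih
      by_cases hr : rel a.1 a.2
      · refine ⟨g, hg, fun st hst hn => ?_⟩
        rcases Finset.mem_insert.1 hst with h | h
        · exact absurd (h ▸ hr) hn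
        · exact hgQ st h hn
      · have hex : ∃ g' ∈ F, ev g' a.1 ≠ ev g' a.2 := by
          simpa [hrel, not_forall] using hr
        obtain ⟨g', hg', hg'ne⟩ := hex
        set P : Bool × Fin n → (Fin p → ℝ) × (Fin p → ℝ) :=
          fun u => (ev g u, ev g' u) with hP
        set sP : Finset ((Fin p → ℝ) × (Fin p → ℝ)) := Finset.image P Finset.univ with hsP
        set vfun : (Fin p → ℝ) × (Fin p → ℝ) → (Fin p → ℝ) :=
          fun z => if h : z ∈ sP then (fun _ => ((sP.equivFin ⟨z, h⟩ : Fin _) : ℝ)) else 0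
          with hvfun
        have hvinj : ∀ z ∈ sP, ∀ z' ∈ sP, vfun z = vfun z' → z = z' := by
          intro z hz z' hz' hv
          rw [hvfun] at hv
          simp only [dif_pos hz, dif_pos hz'] at hv
          have := congrFun hv c₀
          have : sP.equivFin ⟨z, hz⟩ = sP.equivFin ⟨z', hz'⟩ := by
            apply Fin.ext
            exact_mod_cast this
          have := sP.equivFin.injective this
          exact congrArg Subtype.val this
        obtain ⟨θ, hθ⟩ := exists_cont_prescribe sP vfun
        obtain ⟨k, hkF, hk⟩ := hcomp θ g hg g' hg'
        have hevk : ∀ u : Bool × Fin n, ev k u = vfun (P u) := by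
          intro u
          have : ev k u = θ (P u) := hk (y u.1) u.2
          rw [this, hθ _ (Finset.mem_image.2 ⟨u, Finset.mem_univ u, rfl⟩)]
        refine ⟨k, hkF, fun st hst hn => ?_⟩
        have hPne : P st.1 ≠ P st.2 := by
          rcases Finset.mem_insert.1 hst with h | h
          · subst h
            intro hPP
            exact hg'ne (congrArg Prod.snd hPP)
          · intro hPP
            exact hgQ st h hn (congrArg Prod.fst hPP)
        rw [hevk st.1, hevk st.2]
        intro hvv
        exact hPne (hvinj _ (Finset.mem_image.2 ⟨st.1, Finset.mem_univ _, rfl⟩)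
          _ (Finset.mem_image.2 ⟨st.2, Finset.mem_univ _, rfl⟩) hvv)
  obtain ⟨g₀, hg₀F, hg₀sep⟩ := sep_pairs Finset.univ
  have hg₀ : ∀ s t, ev g₀ s = ev g₀ t ↔ rel s t := by
    intro s t
    constructor
    · intro hev'
      by_contra hr
      exact hg₀sep (s, t) (Finset.mem_univ _) hr hev'
    · intro hr
      exact hr g₀ hg₀F
  set values' : Finset (Fin p → ℝ) :=
    Finset.image (fun s : Bool × Fin n => ev g₀ s) Finset.univ with hvalues
  have detect : ∀ v : Fin p → ℝ, ∃ k ∈ F, ∀ b : Bool, ∀ i : Fin n,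
      ev k (b, i) = fun _ => ((Finset.univ.filter fun j => g₀ (y b) j = v).card : ℝ) := by
    intro v
    obtain ⟨θv, hθv⟩ := exists_cont_prescribe values'
      (fun c => if c = v then (fun _ => (1:ℝ)) else 0)
    obtain ⟨t, htF, ht⟩ := hcomp1 θv g₀ hg₀F
    obtain ⟨k, hkF, hk⟩ := hpool t htF
    refine ⟨k, hkF, fun b i => ?_⟩
    have : ev k (b, i) = ∑ j, θv (g₀ (y b) j) := by
      rw [hev]
      simp only
      rw [hk (y b) i]
      exact Finset.sum_congr rfl fun j _ => ht (y b) j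
    rw [this]
    funext c
    rw [Finset.sum_apply]
    have hterm : ∀ j, θv (g₀ (y b) j) c = if g₀ (y b) j = v then (1:ℝ) else 0 := by
      intro j
      have hmem : g₀ (y b) j ∈ values' :=
        Finset.mem_image.2 ⟨(b, j), Finset.mem_univ _, rfl⟩
      rw [hθv _ hmem]
      by_cases hjv : g₀ (y b) j = v
      · simp [hjv]
      · simp [hjv]
    rw [Finset.sum_congr rfl fun j _ => hterm j]
    rw [Finset.sum_boole]
  -- counts equality from a cross relation
  have counts : ∀ i j, rel (false, i) (true, j) → ∀ v : Fin p → ℝ,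
      (Finset.univ.filter fun l => g₀ (y false) l = v).card
        = (Finset.univ.filter fun l => g₀ (y true) l = v).card := by
    intro i j hr v
    obtain ⟨k, hkF, hk⟩ := detect v
    have := hr k hkF
    rw [hk false i, hk true j] at this
    have := congrFun this c₀
    exact_mod_cast this
  -- existence of a permutation matching colors
  have exists_sigma : ∀ i j, rel (false, i) (true, j) →
      ∃ σ : Equiv.Perm (Fin n), ∀ l, g₀ (y false) l = g₀ (y true) (σ l) := by
    intro i j hr
    set q : (Fin p → ℝ) → ℕ :=
      fun v => if h : v ∈ values' then (values'.equivFin ⟨v, h⟩ : Fin _) else 0 with hq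
    have hqinj : ∀ v ∈ values', ∀ w ∈ values', q v = q w → v = w := by
      intro v hv w hw hqq
      rw [hq] at hqq
      simp only [dif_pos hv, dif_pos hw] at hqq
      have : values'.equivFin ⟨v, hv⟩ = values'.equivFin ⟨w, hw⟩ := Fin.ext hqq
      exact congrArg Subtype.val (values'.equivFin.injective this)
    have hmem : ∀ (b : Bool) (l : Fin n), g₀ (y b) l ∈ values' :=
      fun b l => Finset.mem_image.2 ⟨(b, l), Finset.mem_univ _, rfl⟩
    have hcounts : ∀ a : ℕ,
        (Finset.univ.filter fun l => q (g₀ (y false) l) = a).card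
          = (Finset.univ.filter fun l => q (g₀ (y true) l) = a).card := by
      intro a
      by_cases hav : ∃ v ∈ values', q v = a
      · obtain ⟨v, hv, hqv⟩ := hav
        have hfil : ∀ b : Bool, (Finset.univ.filter fun l => q (g₀ (y b) l) = a)
            = (Finset.univ.filter fun l => g₀ (y b) l = v) := by
          intro b
          apply Finset.filter_congr
          intro l _
          constructor
          · intro hl
            exact hqinj _ (hmem b l) _ hv (hl.trans hqv.symm)
          · intro hl
            rw [hl, hqv]
        rw [hfil false, hfil true]
        exact counts i j hr v
      · have hfil : ∀ b : Bool, (Finset.univ.filter fun l => q (g₀ (y b) l) = a) = ∅ := by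
          intro b
          apply Finset.filter_eq_empty_iff.2
          intro l _ hl
          exact hav ⟨g₀ (y b) l, hmem b l, hl⟩
        rw [hfil false, hfil true]
    obtain ⟨σ, hσ⟩ := perm_of_counts (fun l => q (g₀ (y false) l))
      (fun l => q (g₀ (y true) l)) hcounts
    exact ⟨σ, fun l => hqinj _ (hmem false l) _ (hmem true (σ l)) (hσ l)⟩
  -- same-side consistency of f
  have same : ∀ (b : Bool) (i j : Fin n), rel (b, i) (b, j) → f (y b) i = f (y b) j := by
    intro b i j hr
    have hall : ∀ h ∈ F, h (y b) = h (Equiv.swap i j • y b) := by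
      intro h hF
      funext l
      rw [hequiv h hF (Equiv.swap i j) (y b) l, Equiv.swap_inv]
      rcases eq_or_ne l i with rfl | hli
      · rw [Equiv.swap_apply_left]
        exact hr h hF
      · rcases eq_or_ne l j with rfl | hlj
        · rw [Equiv.swap_apply_right]
          exact (hr h hF).symm
        · rw [Equiv.swap_apply_of_ne_of_ne hli hlj]
    have hxy := hfs (y b) (Equiv.swap i j • y b) hall
    have h1' := congrFun hxy i
    rw [hfe (Equiv.swap i j) (y b) i, Equiv.swap_inv, Equiv.swap_apply_left] at h1'
    exact h1'
  -- cross consistency of f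
  have cross : ∀ i j, rel (false, i) (true, j) → f (y false) i = f (y true) j := by
    intro i j hr
    obtain ⟨σ, hσ⟩ := exists_sigma i j hr
    have hrel' : ∀ l, rel (false, l) (true, σ l) := fun l => (hg₀ _ _).1 (hσ l)
    have hall : ∀ h ∈ F, h (y false) = h (σ⁻¹ • y true) := by
      intro h hF
      funext l
      rw [hequiv h hF σ⁻¹ (y true) l, inv_inv]
      exact hrel' l h hF
    have hxy := hfs (y false) (σ⁻¹ • y true) hall
    have h1' := congrFun hxy i
    rw [hfe σ⁻¹ (y true) i, inv_inv] at h1'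
    have h2' : rel (true, σ i) (true, j) := by
      intro g hg
      exact (hrel' i g hg).symm.trans (hr g hg)
    exact h1'.trans (same true (σ i) j h2')
  -- full consistency
  have consist : ∀ s t : Bool × Fin n, rel s t → f (y s.1) s.2 = f (y t.1) t.2 := by
    rintro ⟨b, i⟩ ⟨b', j⟩ hr
    have hsymm : rel (b', j) (b, i) := fun g hg => (hr g hg).symm
    match b, b' with
    | false, false => exact same false i j hr
    | true, true => exact same true i j hr
    | false, true => exact cross i j hr
    | true, false => exact (cross j i hsymm).symm
  -- final interpolating function
  set vstar : (Fin p → ℝ) → (Fin p → ℝ) := fun c =>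
    if h : ∃ s : Bool × Fin n, ev g₀ s = c then f (y h.choose.1) h.choose.2 else 0
    with hvstar
  obtain ⟨θs, hθs⟩ := exists_cont_prescribe values' vstar
  obtain ⟨k, hkF, hk⟩ := hcomp1 θs g₀ hg₀F
  have hkval : ∀ (b : Bool) (i : Fin n), k (y b) i = f (y b) i := by
    intro b i
    have hkbi : k (y b) i = θs (ev g₀ (b, i)) := hk (y b) i
    have hmem : ev g₀ (b, i) ∈ values' :=
      Finset.mem_image.2 ⟨(b, i), Finset.mem_univ _, rfl⟩
    rw [hkbi, hθs _ hmem]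
    simp only [hvstar]
    have hex : ∃ s : Bool × Fin n, ev g₀ s = ev g₀ (b, i) := ⟨(b, i), rfl⟩
    rw [dif_pos hex]
    exact consist hex.choose (b, i) ((hg₀ _ _).1 hex.choose_spec)
  have hyf : y false = x := rfl
  have hyt : y true = x' := rfl
  refine ⟨k, hkF, ?_, ?_⟩
  · funext i
    rw [← hyf]
    exact hkval false i
  · funext i
    rw [← hyt]
    exact hkval true i

end

/-- Equivariant Stone-Weierstrass theorem for node embeddings (symmetric group acting
on blocks of features). -/
theorem stmt12 {X : Type*} [TopologicalSpace X] [CompactSpace X] {n p : ℕ}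
    [MulAction (Equiv.Perm (Fin n)) X] [ContinuousConstSMul (Equiv.Perm (Fin n)) X]
    (F : Set C(X, Fin n → Fin p → ℝ)) (hne : F.Nonempty)
    (hequiv : ∀ f ∈ F, ∀ σ : Equiv.Perm (Fin n), ∀ x : X, ∀ i : Fin n,
      f (σ • x) i = f x (σ⁻¹ i))
    (h1 : ∀ h : C((Fin p → ℝ) × (Fin p → ℝ), Fin p → ℝ), ∀ f ∈ F, ∀ g ∈ F,
      ∀ k : C(X, Fin n → Fin p → ℝ),
        (∀ x : X, ∀ i : Fin n, k x i = h (f x i, g x i)) → k ∈ F)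
    (h2 : ∀ f ∈ F, ∀ k : C(X, Fin n → Fin p → ℝ),
      (∀ x : X, ∀ i : Fin n, k x i = ∑ j : Fin n, f x j) → k ∈ F) :
    closure F = {f : C(X, Fin n → Fin p → ℝ) |
        (∀ σ : Equiv.Perm (Fin n), ∀ x : X, ∀ i : Fin n, f (σ • x) i = f x (σ⁻¹ i)) ∧
        ∀ x x' : X, (∀ h ∈ F, h x = h x') → f x = f x'} := by
  classical
  apply Set.Subset.antisymm
  · intro f hf
    constructor
    · intro σ x i
      have hsub : closure F ⊆ {g : C(X, Fin n → Fin p → ℝ) | g (σ • x) i = g x (σ⁻¹ i)} := by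
        apply closure_minimal
        · intro g hg
          exact hequiv g hg σ x i
        · exact isClosed_eq
            ((continuous_apply i).comp (continuous_eval_const (σ • x)))
            ((continuous_apply (σ⁻¹ i)).comp (continuous_eval_const x))
      exact hsub hf
    · intro x x' hxx'
      have hsub : closure F ⊆ {g : C(X, Fin n → Fin p → ℝ) | g x = g x'} := by
        apply closure_minimal
        · intro g hg
          exact hxx' g hg
        · exact isClosed_eq (continuous_eval_const x)
            (continuous_eval_const x')
      exact hsub hf
  · intro f hf
    obtain ⟨hfe, hfs⟩ := hf
    by_cases hnp : p = 0 ∨ n = 0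
    · obtain ⟨g, hg⟩ := hne
      have hfg : f = g := by
        ext z i c
        rcases hnp with h | h
        · subst h; exact absurd c.2 (by simp)
        · subst h; exact absurd i.2 (by simp)
      exact hfg ▸ subset_closure hg
    push_neg at hnp
    have hmax : ∀ g ∈ F, ∀ g' ∈ F, ∃ k ∈ F, ∀ z i c, k z i c = max (g z i c) (g' z i c) := by
      intro g hg g' hg'
      have hMc : Continuous fun u : (Fin p → ℝ) × (Fin p → ℝ) =>
          fun c => max (u.1 c) (u.2 c) :=
        continuous_pi fun c => ((continuous_apply c).comp continuous_fst).max
          ((continuous_apply c).comp continuous_snd)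
      have hkc : Continuous fun z : X => fun i : Fin n => fun c => max (g z i c) (g' z i c) :=
        continuous_pi fun i => continuous_pi fun c =>
          (((continuous_apply c).comp ((continuous_apply i).comp (map_continuous g))).max
            ((continuous_apply c).comp ((continuous_apply i).comp (map_continuous g'))))
      exact ⟨⟨_, hkc⟩, h1 ⟨_, hMc⟩ g hg g' hg' ⟨_, hkc⟩ (fun z i => rfl), fun z i c => rfl⟩
    have hmin : ∀ g ∈ F, ∀ g' ∈ F, ∃ k ∈ F, ∀ z i c, k z i c = min (g z i c) (g' z i c) := by
      intro g hg g' hg'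
      have hMc : Continuous fun u : (Fin p → ℝ) × (Fin p → ℝ) =>
          fun c => min (u.1 c) (u.2 c) :=
        continuous_pi fun c => ((continuous_apply c).comp continuous_fst).min
          ((continuous_apply c).comp continuous_snd)
      have hkc : Continuous fun z : X => fun i : Fin n => fun c => min (g z i c) (g' z i c) :=
        continuous_pi fun i => continuous_pi fun c =>
          (((continuous_apply c).comp ((continuous_apply i).comp (map_continuous g))).min
            ((continuous_apply c).comp ((continuous_apply i).comp (map_continuous g'))))
      exact ⟨⟨_, hkc⟩, h1 ⟨_, hMc⟩ g hg g' hg' ⟨_, hkc⟩ (fun z i => rfl), fun z i c => rfl⟩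
    exact lattice_approx F hne hmax hmin f
      (fun x x' => two_point F hne hequiv h1 h2 hnp.1 f hfe hfs x x')
end

section
/- Let 𝔽 = ℝ^p and let x₁,…,x_n, y₁,…,y_n ∈ 𝔽 be such that for every permutation σ ∈ S_n, (x₁,…,x_n) ≠ (y_{σ(1)},…,y_{σ(n)}). Then there exist nonnegative integers α₁,…,α_p such that Σᵢ x_{i1}^{α₁}·x_{i2}^{α₂}⋯x_{ip}^{α_p} ≠ Σᵢ y_{i1}^{α₁}·y_{i2}^{α₂}⋯y_{ip}^{α_p}. In particular, there is a continuous function h : 𝔽 → ℝ of product form h(z) = h₁(z₁)⋯h_p(z_p) with Σᵢ h(xᵢ) ≠ Σᵢ h(yᵢ). -/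
open MvPolynomial in
/-- Interpolation: for a finite set `S` of points in `ℝ^p` there is a family of polynomials
which is `1` at the chosen point and `0` at the other points of `S`. -/
lemma stmt13_exists_sep {p : ℕ} (S : Finset (Fin p → ℝ)) :
    ∃ f : (Fin p → ℝ) → MvPolynomial (Fin p) ℝ,
      ∀ v ∈ S, MvPolynomial.eval v (f v) = 1 ∧
        ∀ u ∈ S, u ≠ v → MvPolynomial.eval u (f v) = 0 := by
  classical
  have hj : ∀ v : Fin p → ℝ, ∀ w ∈ S.erase v, ∃ j, v j ≠ w j := by
    intro v w hw
    exact Function.ne_iff.mp (Ne.symm (Finset.ne_of_mem_erase hw))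
  choose j hjspec using hj
  refine ⟨fun v => ∏ w ∈ (S.erase v).attach,
      (C (v (j v w.1 w.2) - w.1 (j v w.1 w.2))⁻¹ *
        (X (j v w.1 w.2) - C (w.1 (j v w.1 w.2)))), fun v hv => ⟨?_, ?_⟩⟩
  · rw [map_prod]
    refine Finset.prod_eq_one fun w _ => ?_
    simp only [map_mul, map_sub, eval_C, eval_X]
    exact inv_mul_cancel₀ (sub_ne_zero.mpr (hjspec v w.1 w.2))
  · intro u hu huv
    rw [map_prod]
    refine Finset.prod_eq_zero (Finset.mem_attach _ ⟨u, Finset.mem_erase.mpr ⟨huv, hu⟩⟩) ?_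
    simp

/-- If the fibers of two tuples have the same cardinalities, the tuples agree up to a
permutation of the index type. -/
lemma stmt13_exists_perm {α : Type*} [DecidableEq α] {n : ℕ} (x y : Fin n → α)
    (h : ∀ a, Fintype.card {i // x i = a} = Fintype.card {i // y i = a}) :
    ∃ σ : Equiv.Perm (Fin n), ∀ i, y (σ i) = x i := by
  classical
  have e : ∀ a, {i // x i = a} ≃ {i // y i = a} := fun a => Fintype.equivOfCardEq (h a)
  refine ⟨(Equiv.sigmaFiberEquiv x).symm.trans
    ((Equiv.sigmaCongrRight e).trans (Equiv.sigmaFiberEquiv y)), fun i => ?_⟩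
  exact ((e (x i)) ⟨i, rfl⟩).2

/-- Power-sum multi-symmetric polynomials separate multisets of vectors in `ℝ^p`. -/
theorem stmt13 {p n : ℕ} (x y : Fin n → Fin p → ℝ)
    (hxy : ∀ σ : Equiv.Perm (Fin n), x ≠ fun i => y (σ i)) :
    (∃ α : Fin p → ℕ,
      ∑ i : Fin n, ∏ j : Fin p, (x i j) ^ (α j) ≠
        ∑ i : Fin n, ∏ j : Fin p, (y i j) ^ (α j)) ∧
    ∃ h : Fin p → ℝ → ℝ, (∀ j : Fin p, Continuous (h j)) ∧
      ∑ i : Fin n, ∏ j : Fin p, h j (x i j) ≠ ∑ i : Fin n, ∏ j : Fin p, h j (y i j) := by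
  classical
  have key : ∃ α : Fin p → ℕ,
      ∑ i : Fin n, ∏ j : Fin p, (x i j) ^ (α j) ≠
        ∑ i : Fin n, ∏ j : Fin p, (y i j) ^ (α j) := by
    by_contra hc
    push_neg at hc
    -- All polynomial moments agree.
    have H : ∀ f : MvPolynomial (Fin p) ℝ,
        ∑ i : Fin n, MvPolynomial.eval (x i) f = ∑ i : Fin n, MvPolynomial.eval (y i) f := by
      intro f
      induction f using MvPolynomial.induction_on' with
      | monomial α r =>
        simp only [MvPolynomial.eval_monomial, Finsupp.prod_pow]
        rw [← Finset.mul_sum, ← Finset.mul_sum, hc (α : Fin p → ℕ)]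
      | add f g hf hg =>
        simp [Finset.sum_add_distrib, hf, hg]
    -- The separating polynomials give equal fiber counts.
    set S : Finset (Fin p → ℝ) := Finset.image x Finset.univ ∪ Finset.image y Finset.univ with hS
    have hxS : ∀ i, x i ∈ S := fun i => Finset.mem_union_left _ (Finset.mem_image_of_mem x (Finset.mem_univ i))
    have hyS : ∀ i, y i ∈ S := fun i => Finset.mem_union_right _ (Finset.mem_image_of_mem y (Finset.mem_univ i))
    obtain ⟨f, hf⟩ := stmt13_exists_sep S
    have hcount : ∀ a, Fintype.card {i // x i = a} = Fintype.card {i // y i = a} := by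
      intro a
      by_cases ha : a ∈ S
      · have hx1 : ∑ i : Fin n, MvPolynomial.eval (x i) (f a)
            = (Fintype.card {i // x i = a} : ℝ) := by
          rw [Fintype.card_subtype]
          rw [Finset.card_filter]
          push_cast
          refine Finset.sum_congr rfl fun i _ => ?_
          by_cases hxa : x i = a
          · simp [hxa, (hf a ha).1]
          · simp [hxa, (hf a ha).2 (x i) (hxS i) hxa]
        have hy1 : ∑ i : Fin n, MvPolynomial.eval (y i) (f a)
            = (Fintype.card {i // y i = a} : ℝ) := by
          rw [Fintype.card_subtype]
          rw [Finset.card_filter]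
          push_cast
          refine Finset.sum_congr rfl fun i _ => ?_
          by_cases hya : y i = a
          · simp [hya, (hf a ha).1]
          · simp [hya, (hf a ha).2 (y i) (hyS i) hya]
        have := H (f a)
        rw [hx1, hy1] at this
        exact_mod_cast this
      · have hx0 : Fintype.card {i // x i = a} = 0 := by
          rw [Fintype.card_eq_zero_iff]
          exact ⟨fun ⟨i, hi⟩ => ha (hi ▸ hxS i)⟩
        have hy0 : Fintype.card {i // y i = a} = 0 := by
          rw [Fintype.card_eq_zero_iff]
          exact ⟨fun ⟨i, hi⟩ => ha (hi ▸ hyS i)⟩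
        rw [hx0, hy0]
    obtain ⟨σ, hσ⟩ := stmt13_exists_perm x y hcount
    exact hxy σ (funext fun i => (hσ i).symm)
  refine ⟨key, ?_⟩
  obtain ⟨α, hα⟩ := key
  exact ⟨fun j t => t ^ α j, fun j => continuous_pow _, hα⟩
end

section
/- Let X be a compact subset of ℝ^n, and let F = {x ↦ g(Σᵢ f(xᵢ)) : f ∈ C(ℝ, ℝ^h), g ∈ C(ℝ^h, ℝ), h ≥ 1} be the set of invariant PointNet-type functions. Then sep(F) = {(x, σ⋆x) : x ∈ X, σ ∈ S_n}, where (σ⋆x)_{σ(i)} = x_i, and consequently the uniform closure of F is the set C_I(X, ℝ) of all continuous S_n-invariant real-valued functions on X. -/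
open MvPolynomial in
private lemma aux_esymm {n : ℕ} {y y' : Fin n → ℝ}
    (H : ∀ m : ℕ, 0 < m → m ≤ n → MvPolynomial.aeval y (psum (Fin n) ℝ m) =
      MvPolynomial.aeval y' (psum (Fin n) ℝ m)) :
    ∀ k : ℕ, k ≤ n → MvPolynomial.aeval y (esymm (Fin n) ℝ k) =
      MvPolynomial.aeval y' (esymm (Fin n) ℝ k) := by
  intro k
  induction k using Nat.strong_induction_on with
  | _ k ih =>
    intro hkn
    rcases Nat.eq_zero_or_pos k with h0 | hk
    · subst h0; simp [esymm_zero]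
    · have key := congrArg (MvPolynomial.aeval y) (mul_esymm_eq_sum (Fin n) ℝ k)
      have key' := congrArg (MvPolynomial.aeval y') (mul_esymm_eq_sum (Fin n) ℝ k)
      simp only [map_mul, map_natCast, map_pow, map_neg, map_one, map_sum] at key key'
      have hsum : ∑ a ∈ Finset.HasAntidiagonal.antidiagonal k with a.1 < k,
            (-1 : ℝ) ^ a.1 * MvPolynomial.aeval y (esymm (Fin n) ℝ a.1) *
              MvPolynomial.aeval y (psum (Fin n) ℝ a.2) =
          ∑ a ∈ Finset.HasAntidiagonal.antidiagonal k with a.1 < k,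
            (-1 : ℝ) ^ a.1 * MvPolynomial.aeval y' (esymm (Fin n) ℝ a.1) *
              MvPolynomial.aeval y' (psum (Fin n) ℝ a.2) := by
        refine Finset.sum_congr rfl fun a ha => ?_
        rw [Finset.mem_filter, Finset.HasAntidiagonal.mem_antidiagonal] at ha
        have h1 : a.1 < k := ha.2
        have h2 : a.1 + a.2 = k := ha.1
        rw [ih a.1 h1 (le_trans (le_of_lt h1) hkn),
          H a.2 (by omega) (by omega)]
      have : (k : ℝ) * MvPolynomial.aeval y (esymm (Fin n) ℝ k) =
          (k : ℝ) * MvPolynomial.aeval y' (esymm (Fin n) ℝ k) := by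
        rw [key, key', hsum]
      exact mul_left_cancel₀ (Nat.cast_ne_zero.mpr hk.ne') this

open Polynomial in
private lemma aux_ms {n : ℕ} {x x' : Fin n → ℝ}
    (H : ∀ m : ℕ, 0 < m → m ≤ n → ∑ i, x i ^ m = ∑ i, x' i ^ m) :
    Multiset.map x Finset.univ.val = Multiset.map x' Finset.univ.val := by
  set y : Fin n → ℝ := fun i => -(x i) with hy
  set y' : Fin n → ℝ := fun i => -(x' i) with hy'
  have Hy : ∀ m : ℕ, 0 < m → m ≤ n →
      MvPolynomial.aeval y (MvPolynomial.psum (Fin n) ℝ m) =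
      MvPolynomial.aeval y' (MvPolynomial.psum (Fin n) ℝ m) := by
    intro m hm hmn
    have e : ∀ z : Fin n → ℝ, MvPolynomial.aeval (fun i => -(z i))
        (MvPolynomial.psum (Fin n) ℝ m) = (-1 : ℝ) ^ m * ∑ i, z i ^ m := by
      intro z
      simp only [MvPolynomial.psum, map_sum, map_pow, MvPolynomial.aeval_X]
      rw [Finset.mul_sum]
      exact Finset.sum_congr rfl fun i _ => neg_pow _ _
    rw [hy, hy', e, e, H m hm hmn]
  have He := aux_esymm Hy
  have hmse : ∀ j : ℕ, j ≤ n →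
      (Multiset.map y Finset.univ.val).esymm j = (Multiset.map y' Finset.univ.val).esymm j := by
    intro j hj
    rw [← MvPolynomial.aeval_esymm_eq_multiset_esymm (Fin n) ℝ j y,
      ← MvPolynomial.aeval_esymm_eq_multiset_esymm (Fin n) ℝ j y']
    exact He j hj
  have hcard : Multiset.card (Multiset.map y Finset.univ.val) = n := by simp
  have hcard' : Multiset.card (Multiset.map y' Finset.univ.val) = n := by simp
  have hprod : ((Multiset.map y Finset.univ.val).map fun r => X + C r).prod =
      ((Multiset.map y' Finset.univ.val).map fun r => X + C r).prod := by
    rw [Multiset.prod_X_add_C_eq_sum_esymm, Multiset.prod_X_add_C_eq_sum_esymm, hcard, hcard']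
    exact Finset.sum_congr rfl fun j hj => by
      rw [hmse j (by simpa using Nat.lt_succ_iff.mp (Finset.mem_range.mp hj))]
  have h1 : ((Multiset.map y Finset.univ.val).map fun r => X + C r) =
      ((Multiset.map x Finset.univ.val).map fun a => X - C a) := by
    rw [Multiset.map_map, Multiset.map_map]
    exact Multiset.map_congr rfl fun i _ => by
      simp [hy, Function.comp, sub_eq_add_neg]
  have h1' : ((Multiset.map y' Finset.univ.val).map fun r => X + C r) =
      ((Multiset.map x' Finset.univ.val).map fun a => X - C a) := by
    rw [Multiset.map_map, Multiset.map_map]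
    exact Multiset.map_congr rfl fun i _ => by
      simp [hy', Function.comp, sub_eq_add_neg]
  calc Multiset.map x Finset.univ.val
      = (((Multiset.map x Finset.univ.val).map fun a => X - C a).prod).roots :=
        (roots_multiset_prod_X_sub_C _).symm
    _ = (((Multiset.map x' Finset.univ.val).map fun a => X - C a).prod).roots := by
        rw [← h1, ← h1', hprod]
    _ = Multiset.map x' Finset.univ.val := roots_multiset_prod_X_sub_C _

private lemma aux_perm {n : ℕ} {x x' : Fin n → ℝ}
    (H : ∀ m : ℕ, 0 < m → m ≤ n → ∑ i, x i ^ m = ∑ i, x' i ^ m) :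
    ∃ σ : Equiv.Perm (Fin n), x' = fun i => x (σ⁻¹ i) := by
  have hms := aux_ms H
  have hperm : (List.ofFn x).Perm (List.ofFn x') := by
    rw [← Multiset.coe_eq_coe, ← Fin.univ_val_map, ← Fin.univ_val_map]
    exact hms
  have h1 : Monotone (x ∘ Tuple.sort x) := Tuple.monotone_sort x
  have h2 : Monotone (x' ∘ Tuple.sort x') := Tuple.monotone_sort x'
  have heq : x ∘ Tuple.sort x = x' ∘ Tuple.sort x' :=
    List.ofFn_injective <| List.Perm.eq_of_sortedLE h1.sortedLE_ofFn h2.sortedLE_ofFn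
      (((Tuple.sort x).ofFn_comp_perm x).trans
        (hperm.trans ((Tuple.sort x').ofFn_comp_perm x').symm))
  refine ⟨(((Tuple.sort x')⁻¹).trans (Tuple.sort x))⁻¹, ?_⟩
  funext i
  have := congrFun heq ((Tuple.sort x')⁻¹ i)
  simp only [Function.comp_apply] at this
  simp only [inv_inv, Equiv.trans_apply]
  rw [this, ← Equiv.Perm.mul_apply, mul_inv_cancel, Equiv.Perm.one_apply]

/-- Universality of invariant PointNet: its separating power is exactly the orbit
equivalence relation of `S_n`, and its uniform closure is the set of all continuous
invariant functions. -/
theorem stmt14 {n : ℕ} (X : Set (Fin n → ℝ)) (hX : IsCompact X)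
    (hXinv : ∀ σ : Equiv.Perm (Fin n), ∀ x ∈ X, (fun i => x (σ⁻¹ i)) ∈ X)
    (F : Set C(X, ℝ))
    (hF : F = {k : C(X, ℝ) | ∃ h : ℕ, ∃ f : C(ℝ, Fin h → ℝ), ∃ g : C(Fin h → ℝ, ℝ),
      ∀ x : X, k x = g (∑ i : Fin n, f ((x : Fin n → ℝ) i))}) :
    (∀ x x' : X, (∀ k ∈ F, k x = k x') ↔
      ∃ σ : Equiv.Perm (Fin n), (x' : Fin n → ℝ) = fun i => (x : Fin n → ℝ) (σ⁻¹ i)) ∧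
    closure F = {k : C(X, ℝ) | ∀ x x' : X,
      (∃ σ : Equiv.Perm (Fin n), (x' : Fin n → ℝ) = fun i => (x : Fin n → ℝ) (σ⁻¹ i)) →
        k x = k x'} := by
  -- every element of F is invariant
  have hinv : ∀ k ∈ F, ∀ x x' : X,
      (∃ σ : Equiv.Perm (Fin n), (x' : Fin n → ℝ) = fun i => (x : Fin n → ℝ) (σ⁻¹ i)) →
      k x = k x' := by
    rintro k hk x x' ⟨σ, hσ⟩
    rw [hF] at hk
    obtain ⟨h, f, g, hfg⟩ := hk
    rw [hfg x, hfg x', hσ]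
    congr 1
    exact (Equiv.sum_comp (σ⁻¹) (fun i => f ((x : Fin n → ℝ) i))).symm
  -- power sums belong to F
  have hpow : ∀ m : ℕ, ∃ k ∈ F, ∀ x : X, k x = ∑ i, ((x : Fin n → ℝ) i) ^ m := by
    intro m
    refine ⟨⟨fun z => ∑ i, ((z : Fin n → ℝ) i) ^ m, ?_⟩, ?_, fun x => rfl⟩
    · exact continuous_finset_sum _ fun i _ =>
        (((continuous_apply i).comp continuous_subtype_val).pow m)
    · rw [hF]
      refine ⟨1, ⟨fun t _ => t ^ m, continuous_pi fun _ => continuous_pow m⟩,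
        ⟨fun v => v 0, continuous_apply 0⟩, fun x => ?_⟩
      simp
  -- the separation characterization
  have hsep : ∀ x x' : X, (∀ k ∈ F, k x = k x') ↔
      ∃ σ : Equiv.Perm (Fin n), (x' : Fin n → ℝ) = fun i => (x : Fin n → ℝ) (σ⁻¹ i) := by
    intro x x'
    constructor
    · intro hyp
      refine aux_perm fun m hm hmn => ?_
      obtain ⟨k, hkF, hkv⟩ := hpow m
      have := hyp k hkF
      rwa [hkv x, hkv x'] at this
    · exact fun hσ k hk => hinv k hk x x' hσ
  refine ⟨hsep, ?_⟩
  -- now the closure statement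
  set Inv : Set C(X, ℝ) := {k : C(X, ℝ) | ∀ x x' : X,
      (∃ σ : Equiv.Perm (Fin n), (x' : Fin n → ℝ) = fun i => (x : Fin n → ℝ) (σ⁻¹ i)) →
        k x = k x'} with hInv
  have hFInv : F ⊆ Inv := fun k hk x x' hσ => hinv k hk x x' hσ
  have hclosed : IsClosed Inv := by
    have : Inv = ⋂ (x : X) (x' : X)
        (_ : ∃ σ : Equiv.Perm (Fin n), (x' : Fin n → ℝ) = fun i => (x : Fin n → ℝ) (σ⁻¹ i)),
        {k : C(X, ℝ) | k x = k x'} := by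
      ext k; simp [hInv, Set.mem_iInter]
    rw [this]
    exact isClosed_iInter fun x => isClosed_iInter fun x' => isClosed_iInter fun _ =>
      isClosed_eq (continuous_eval_const x) (continuous_eval_const x')
  have hInvF : Inv ⊆ F := by
    intro k hk
    haveI : CompactSpace X := isCompact_iff_compactSpace.mp hX
    -- the moment map
    set f0 : C(ℝ, Fin n → ℝ) :=
      ⟨fun t j => t ^ ((j : ℕ) + 1), continuous_pi fun j => continuous_pow _⟩ with hf0
    set φ : X → (Fin n → ℝ) := fun z => ∑ i, f0 ((z : Fin n → ℝ) i) with hφ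
    have hφc : Continuous φ := by
      apply continuous_finset_sum
      intro i _
      exact f0.continuous.comp ((continuous_apply i).comp continuous_subtype_val)
    set Y : Set (Fin n → ℝ) := Set.range φ with hY
    have hYc : IsCompact Y := isCompact_range hφc
    -- the factored map on Y
    set ψ : X → Y := fun z => ⟨φ z, Set.mem_range_self z⟩ with hψ
    have hψc : Continuous ψ := hφc.subtype_mk _
    have hψs : Function.Surjective ψ := fun y => by
      obtain ⟨z, hz⟩ := y.2
      exact ⟨z, Subtype.ext hz⟩
    have hq := hψc.isClosedMap.isQuotientMap hψc hψs
    -- k is constant on fibers of φ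
    have hfib : ∀ z z' : X, φ z = φ z' → k z = k z' := by
      intro z z' hzz
      refine hk z z' (aux_perm fun m hm hmn => ?_)
      have h2 := congrFun hzz ⟨m - 1, by omega⟩
      simp only [hφ, hf0, ContinuousMap.coe_mk, Finset.sum_apply] at h2
      have hm1 : m - 1 + 1 = m := by omega
      rw [hm1] at h2
      exact h2
    -- define the descended function
    have hex : ∀ y : Y, ∃ z : X, ψ z = y := hψs
    choose sec hsec using hex
    set g0 : Y → ℝ := fun y => k (sec y) with hg0
    have hfact : ∀ z : X, g0 (ψ z) = k z := by
      intro z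
      apply hfib
      have : φ (sec (ψ z)) = φ z := congrArg Subtype.val (hsec (ψ z))
      exact this
    have hg0c : Continuous g0 := by
      rw [hq.continuous_iff]
      have : g0 ∘ ψ = fun z => k z := funext hfact
      rw [this]
      exact k.continuous
    -- Tietze extension
    obtain ⟨G, hG⟩ := ContinuousMap.exists_restrict_eq (Y := ℝ) hYc.isClosed ⟨g0, hg0c⟩
    rw [hF]
    refine ⟨n, f0, G, fun x => ?_⟩
    have hGx : G (φ x) = g0 (ψ x) := ContinuousMap.congr_fun hG (ψ x)
    calc k x = g0 (ψ x) := (hfact x).symm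
      _ = G (φ x) := hGx.symm
      _ = G (∑ i, f0 ((x : Fin n → ℝ) i)) := rfl
  exact le_antisymm (closure_minimal hFInv hclosed)
    (le_trans hInvF subset_closure)
end

section
/- Let X be a compact subset of ℝ^n and F = {x ↦ (f(x₁),…,f(x_n)) : f ∈ C(ℝ,ℝ)} ⊆ C(X, ℝ^n). Then F is a subalgebra of C(X, ℝ^n) containing the constant function 1, every element of F is S_n-equivariant, and sep(F) = {(x,x) : x ∈ X}; yet F is not dense in C(X, ℝ^n) whenever C_E(X,ℝ^n) ≠ C(X,ℝ^n), since the closure of F is contained in the (closed) set C_E(X, ℝ^n) of equivariant functions. -/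
/-- Equivariant PointNet without transmission: a unital point-separating subalgebra of
vector-valued functions need not be dense, since its closure consists of equivariant
functions. -/
theorem stmt15 {n : ℕ} (X : Set (Fin n → ℝ)) (hX : IsCompact X)
    (hXinv : ∀ σ : Equiv.Perm (Fin n), ∀ x ∈ X, (fun i => x (σ⁻¹ i)) ∈ X)
    (F : Set C(X, Fin n → ℝ))
    (hF : F = {k : C(X, Fin n → ℝ) | ∃ f : C(ℝ, ℝ),
      ∀ x : X, k x = fun i => f ((x : Fin n → ℝ) i)}) :
    ((1 : C(X, Fin n → ℝ)) ∈ F) ∧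
    (∀ f ∈ F, ∀ g ∈ F, f + g ∈ F ∧ f * g ∈ F) ∧
    (∀ c : ℝ, ∀ f ∈ F, c • f ∈ F) ∧
    (∀ k ∈ F, ∀ σ : Equiv.Perm (Fin n), ∀ x x' : X,
      ((x' : Fin n → ℝ) = fun i => (x : Fin n → ℝ) (σ⁻¹ i)) →
        k x' = fun i => k x (σ⁻¹ i)) ∧
    (∀ x x' : X, (∀ k ∈ F, k x = k x') → x = x') ∧
    closure F ⊆ {k : C(X, Fin n → ℝ) | ∀ σ : Equiv.Perm (Fin n), ∀ x x' : X,
      ((x' : Fin n → ℝ) = fun i => (x : Fin n → ℝ) (σ⁻¹ i)) →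
        k x' = fun i => k x (σ⁻¹ i)} ∧
    (({k : C(X, Fin n → ℝ) | ∀ σ : Equiv.Perm (Fin n), ∀ x x' : X,
        ((x' : Fin n → ℝ) = fun i => (x : Fin n → ℝ) (σ⁻¹ i)) →
          k x' = fun i => k x (σ⁻¹ i)} ≠ Set.univ) →
      closure F ≠ Set.univ) := by
  subst hF
  -- equivariance of members of F
  have hequiv : ∀ k ∈ {k : C(X, Fin n → ℝ) | ∃ f : C(ℝ, ℝ),
      ∀ x : X, k x = fun i => f ((x : Fin n → ℝ) i)},
      ∀ σ : Equiv.Perm (Fin n), ∀ x x' : X,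
      ((x' : Fin n → ℝ) = fun i => (x : Fin n → ℝ) (σ⁻¹ i)) →
        k x' = fun i => k x (σ⁻¹ i) := by
    rintro k ⟨f, hf⟩ σ x x' hx'
    rw [hf x, hf x']
    funext i
    simp [congrFun hx' i]
  -- the equivariant set is closed
  have hEclosed : IsClosed {k : C(X, Fin n → ℝ) | ∀ σ : Equiv.Perm (Fin n), ∀ x x' : X,
      ((x' : Fin n → ℝ) = fun i => (x : Fin n → ℝ) (σ⁻¹ i)) →
        k x' = fun i => k x (σ⁻¹ i)} := by
    have : {k : C(X, Fin n → ℝ) | ∀ σ : Equiv.Perm (Fin n), ∀ x x' : X,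
        ((x' : Fin n → ℝ) = fun i => (x : Fin n → ℝ) (σ⁻¹ i)) →
          k x' = fun i => k x (σ⁻¹ i)} =
        ⋂ (σ : Equiv.Perm (Fin n)) (x : X) (x' : X)
          (_ : (x' : Fin n → ℝ) = fun i => (x : Fin n → ℝ) (σ⁻¹ i)),
          {k : C(X, Fin n → ℝ) | k x' = fun i => k x (σ⁻¹ i)} := by
      ext k; simp [Set.mem_iInter]
    rw [this]
    refine isClosed_iInter fun σ => isClosed_iInter fun x => isClosed_iInter fun x' =>
      isClosed_iInter fun _ => isClosed_eq ?_ ?_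
    · exact (continuous_eval_const x')
    · exact continuous_pi fun i =>
        (continuous_apply (σ⁻¹ i)).comp (continuous_eval_const x)
  have hsub : closure {k : C(X, Fin n → ℝ) | ∃ f : C(ℝ, ℝ),
      ∀ x : X, k x = fun i => f ((x : Fin n → ℝ) i)} ⊆
      {k : C(X, Fin n → ℝ) | ∀ σ : Equiv.Perm (Fin n), ∀ x x' : X,
        ((x' : Fin n → ℝ) = fun i => (x : Fin n → ℝ) (σ⁻¹ i)) →
          k x' = fun i => k x (σ⁻¹ i)} :=
    closure_minimal hequiv hEclosed
  refine ⟨⟨1, fun x => rfl⟩, ?_, ?_, hequiv, ?_, hsub, ?_⟩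
  · rintro f ⟨a, ha⟩ g ⟨b, hb⟩
    exact ⟨⟨a + b, fun x => by funext i; simp [ha x, hb x]⟩,
           ⟨a * b, fun x => by funext i; simp [ha x, hb x]⟩⟩
  · rintro c f ⟨a, ha⟩
    exact ⟨c • a, fun x => by funext i; simp [ha x]⟩
  · intro x x' h
    have hid : (⟨fun x => (x : Fin n → ℝ), continuous_subtype_val⟩ : C(X, Fin n → ℝ)) ∈
        {k : C(X, Fin n → ℝ) | ∃ f : C(ℝ, ℝ),
          ∀ x : X, k x = fun i => f ((x : Fin n → ℝ) i)} :=
      ⟨ContinuousMap.id ℝ, fun x => rfl⟩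
    have := h _ hid
    exact Subtype.ext this
  · intro hne hcl
    exact hne (Set.eq_univ_of_univ_subset (hcl ▸ hsub))
end

section
/- Let X be a compact space and F ⊆ C(X,ℝ) a subalgebra containing the constant function 1. Let X_F = X/sep(F) be the quotient of X by the equivalence relation sep(F), with quotient map π_F. Then X_F is compact, every f ∈ F factors uniquely as f = f̂ ∘ π_F with f̂ continuous on X_F, the set F̂ = {f̂ : f ∈ F} separates points of X_F, and F̂ is dense in C(X_F, ℝ). -/
/-- Factorization through the quotient by the separating-power equivalence relation:
the quotient is compact, every member of the algebra factors uniquely and continuously,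
the factored family separates points, and it is dense. -/
theorem stmt17 {X : Type*} [TopologicalSpace X] [CompactSpace X]
    (F : Subalgebra ℝ C(X, ℝ)) (s : Setoid X)
    (hs : ∀ x x' : X, s.r x x' ↔ ∀ f ∈ F, f x = f x') :
    CompactSpace (Quotient s) ∧
    (∀ f ∈ F, ∃! fhat : C(Quotient s, ℝ), ∀ x : X, fhat (Quotient.mk s x) = f x) ∧
    (∀ a b : Quotient s, a ≠ b →
      ∃ k : C(Quotient s, ℝ), (∃ f ∈ F, ∀ x : X, k (Quotient.mk s x) = f x) ∧ k a ≠ k b) ∧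
    Dense {k : C(Quotient s, ℝ) | ∃ f ∈ F, ∀ x : X, k (Quotient.mk s x) = f x} := by
  have hπc : Continuous (Quotient.mk s) := continuous_quotient_mk'
  let π : C(X, Quotient s) := ⟨Quotient.mk s, hπc⟩
  -- factorization of a given f ∈ F
  let lift : ∀ f ∈ F, C(Quotient s, ℝ) := fun f hf =>
    ⟨Quotient.lift f (fun a b h => (hs a b).1 h f hf),
      (map_continuous f).quotient_lift _⟩
  have lift_spec : ∀ (f : C(X, ℝ)) (hf : f ∈ F) (x : X),
      (lift f hf) (Quotient.mk s x) = f x := fun _ _ _ => rfl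
  have uniq : ∀ (k k' : C(Quotient s, ℝ)),
      (∀ x : X, k (Quotient.mk s x) = k' (Quotient.mk s x)) → k = k' := by
    intro k k' h
    ext a
    induction a using Quotient.ind
    exact h _
  refine ⟨inferInstance, ?_, ?_, ?_⟩
  · intro f hf
    exact ⟨lift f hf, lift_spec f hf, fun k hk => uniq k (lift f hf)
      (fun x => (hk x).trans (lift_spec f hf x).symm)⟩
  · intro a b hab
    induction a using Quotient.ind with | _ x =>
    induction b using Quotient.ind with | _ x' =>
    have hne : ¬ s.r x x' := fun h => hab (Quotient.sound h)
    rw [hs] at hne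
    push_neg at hne
    obtain ⟨f, hf, hfx⟩ := hne
    refine ⟨lift f hf, ⟨f, hf, lift_spec f hf⟩, ?_⟩
    rw [lift_spec f hf, lift_spec f hf]
    exact hfx
  · set G : Subalgebra ℝ C(Quotient s, ℝ) :=
      F.comap (ContinuousMap.compRightAlgHom ℝ ℝ π) with hG
    have hmem : ∀ k : C(Quotient s, ℝ), k ∈ G ↔ k.comp π ∈ F := fun k => Iff.rfl
    have hset : {k : C(Quotient s, ℝ) | ∃ f ∈ F, ∀ x : X, k (Quotient.mk s x) = f x}
        = (G : Set C(Quotient s, ℝ)) := by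
      ext k
      simp only [Set.mem_setOf_eq, SetLike.mem_coe, hmem]
      constructor
      · rintro ⟨f, hf, h⟩
        have : k.comp π = f := ContinuousMap.ext h
        rwa [this]
      · intro h
        exact ⟨k.comp π, h, fun _ => rfl⟩
    rw [hset]
    have hsep : G.SeparatesPoints := by
      intro a b hab
      induction a using Quotient.ind with | _ x =>
      induction b using Quotient.ind with | _ x' =>
      have hne : ¬ s.r x x' := fun h => hab (Quotient.sound h)
      rw [hs] at hne
      push_neg at hne
      obtain ⟨f, hf, hfx⟩ := hne
      refine ⟨lift f hf, ⟨lift f hf, ?_, rfl⟩, ?_⟩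
      · show lift f hf ∈ G
        rw [hmem]
        have : (lift f hf).comp π = f := ContinuousMap.ext (lift_spec f hf)
        rwa [this]
      · rw [lift_spec f hf, lift_spec f hf]
        exact hfx
    have htop := ContinuousMap.subalgebra_topologicalClosure_eq_top_of_separatesPoints G hsep
    rw [dense_iff_closure_eq]
    have := congrArg (SetLike.coe) htop
    rwa [Subalgebra.topologicalClosure_coe, Algebra.coe_top] at this
end
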